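/- arXiv:1409.4156 — 10 statements merged into one kernel-verified Lean document; each statement's English description precedes it below -/
import Mathlib

section
/- Every truncation poset S decomposes as a disjoint union of sub-posets S_i, indexed by the elements i of S with |i| = 1, where S_i = { s ∈ S : i divides s }, and each S_i is isomorphic (via the norm function |−|) to an ordinary truncation set (a subset of ℕ closed under division, ordered by divisibility). -/
namespace TP

def IsTPNorm {S : Type*} [PartialOrder S] (ν : S → ℕ) : Prop :=
  (∀ s, 0 < ν s) ∧
  (∀ s t : S, s ≤ t → ν s ∣ ν t) ∧
  (∀ s t u : S, s ≤ t → t ≤ u → ν u / ν s = (ν u / ν t) * (ν t / ν s)) ∧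
  (∀ (s : S) (d : ℕ), d ∣ ν s → ∃! t : S, t ≤ s ∧ ν t = ν s / d) ∧
  (∀ s t t' : S, s ≤ t → s ≤ t' → ν t = ν t' → t = t')

def IsTPMap {S T : Type*} [PartialOrder S] [PartialOrder T] (νS : S → ℕ) (νT : T → ℕ)
    (f : S → T) : Prop :=
  ∀ s₁ s₂ : S, s₁ ≤ s₂ → f s₁ ≤ f s₂ ∧ νT (f s₂) / νT (f s₁) = νS s₂ / νS s₁

def IsFibration {S T : Type*} [PartialOrder S] [PartialOrder T] (f : S → T) : Prop :=
  ∀ (s : S) (t' : T), f s ≤ t' → ∃ s', s ≤ s' ∧ f s' = t'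

def IsTMap {S T : Type*} [PartialOrder S] [PartialOrder T] (νS : S → ℕ) (νT : T → ℕ)
    (f : S → T) : Prop :=
  IsTPMap νS νT f ∧ IsFibration f ∧ ∀ t : T, (f ⁻¹' {t}).Finite

def SameComp {S : Type*} [PartialOrder S] (ν : S → ℕ) (a b : S) : Prop :=
  ∃ i : S, ν i = 1 ∧ i ≤ a ∧ i ≤ b

def hatPreim {S T : Type*} [PartialOrder S] [PartialOrder T] (f : S → T) (t : T) : Set S :=
  {s | t ≤ f s ∧ ∀ s', s' ≤ s → t ≤ f s' → s' = s}

def IsNMap {S T : Type*} [PartialOrder S] [PartialOrder T] (νS : S → ℕ) (νT : T → ℕ)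
    (f : S → T) : Prop :=
  IsTPMap νS νT f ∧
  (∀ (s : S) (t' : T), SameComp νT (f s) t' → ∃ s', SameComp νS s s' ∧ t' ≤ f s') ∧
  ∀ t : T, (hatPreim f t).Finite

noncomputable def ghost {S : Type*} [PartialOrder S] (ν : S → ℕ) {k : Type*} [CommRing k]
    (a : S → k) : S → k :=
  fun s => ∑ᶠ t ∈ {t : S | t ≤ s}, (ν t : k) * a t ^ (ν s / ν t)

end TP


/-- Every truncation poset decomposes as the disjoint union of the components
`S_i = {s | i ≤ s}` over the norm-1 elements `i`, and each component is isomorphic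
via the norm to an ordinary truncation set (divisor-closed subset of ℕ, ordered by
divisibility). -/
theorem stmt0 {S : Type*} [PartialOrder S] (ν : S → ℕ) (hν : TP.IsTPNorm ν) :
    (∀ s : S, ∃! i : S, ν i = 1 ∧ i ≤ s) ∧
    ∀ i : S, ν i = 1 →
      Set.InjOn ν {s : S | i ≤ s} ∧
      (∀ s t : S, i ≤ s → i ≤ t → (s ≤ t ↔ ν s ∣ ν t)) ∧
      (∀ s : S, i ≤ s → ∀ d : ℕ, 0 < d → d ∣ ν s → ∃ t : S, i ≤ t ∧ ν t = d) := by
  obtain ⟨hpos, hdvd, hmul, hex, huniq⟩ := hν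
  have hunit : ∀ s : S, ∃! i : S, ν i = 1 ∧ i ≤ s := by
    intro s
    obtain ⟨t, ⟨hts, hνt⟩, hun⟩ := hex s (ν s) dvd_rfl
    rw [Nat.div_self (hpos s)] at hνt
    refine ⟨t, ⟨hνt, hts⟩, fun j ⟨hj1, hj2⟩ => hun j ⟨hj2, ?_⟩⟩
    rw [hj1, Nat.div_self (hpos s)]
  refine ⟨hunit, fun i hi => ?_⟩
  -- if i ≤ t and u ≤ t then i ≤ u
  have hdesc : ∀ t u : S, i ≤ t → u ≤ t → i ≤ u := by
    intro t u hit hut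
    obtain ⟨j, ⟨hj1, hju⟩, _⟩ := hunit u
    obtain ⟨j', -, hu'⟩ := hunit t
    have h1 := hu' j ⟨hj1, hju.trans hut⟩
    have h2 := hu' i ⟨hi, hit⟩
    rw [h2, ← h1]
    exact hju
  refine ⟨fun s hs t ht h => huniq i s t hs ht h, fun s t his hit => ?_, ?_⟩
  · refine ⟨fun h => hdvd s t h, fun h => ?_⟩
    obtain ⟨u, ⟨hut, hνu⟩, -⟩ := hex t (ν t / ν s) (Nat.div_dvd_of_dvd h)
    rw [Nat.div_div_self h (hpos t).ne'] at hνu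
    have := huniq i u s (hdesc t u hit hut) his hνu
    rw [← this]; exact hut
  · intro s his d hd hds
    obtain ⟨t, ⟨hts, hνt⟩, -⟩ := hex s (ν s / d) (Nat.div_dvd_of_dvd hds)
    rw [Nat.div_div_self hds (hpos s).ne'] at hνt
    exact ⟨t, hdesc s t his hts, hνt⟩
end

section
/- Dwork's lemma for truncation posets: Let S be a truncation poset, k a commutative ring, and for each prime p let φ_p : k → k be a ring homomorphism with φ_p(a) ≡ a^p (mod p k) for all a ∈ k. Then a vector ⟨x_s⟩ ∈ k^S is in the image of the ghost map w : W_S(k) → k^S if and only if for every prime p and every s ∈ S with p dividing |s|, x_s ≡ φ_p(x_{s/p}) (mod p^{v_p(|s|)} k), where v_p denotes p-adic valuation and s/p is the unique element t | s with |t| = |s|/p. -/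
namespace DworkAux

variable {S : Type*} [PartialOrder S] {ν : S → ℕ}

lemma unique_below (hν : TP.IsTPNorm ν) {s u u' : S} (hu : u ≤ s) (hu' : u' ≤ s)
    (h : ν u = ν u') : u = u' := by
  obtain ⟨hpos, hdvd, -, hex, -⟩ := hν
  have hd : ν u ∣ ν s := hdvd _ _ hu
  have hd' : (ν s / ν u) ∣ ν s := Nat.div_dvd_of_dvd hd
  obtain ⟨t, -, ht⟩ := hex s (ν s / ν u) hd'
  have hself : ν s / (ν s / ν u) = ν u := Nat.div_div_self hd (hpos s).ne'
  have h1 := ht u ⟨hu, hself.symm⟩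
  have h2 := ht u' ⟨hu', by rw [hself, h]⟩
  rw [h1, h2]

lemma eq_of_le_of_norm_eq (hν : TP.IsTPNorm ν) {s u : S} (hu : u ≤ s) (h : ν u = ν s) :
    u = s := unique_below hν hu le_rfl h

lemma le_iff_dvd (hν : TP.IsTPNorm ν) {s u t : S} (hu : u ≤ s) (ht : t ≤ s) :
    u ≤ t ↔ ν u ∣ ν t := by
  constructor
  · exact fun h => hν.2.1 _ _ h
  · intro hd
    obtain ⟨u', hu't, hu'⟩ := (hν.2.2.2.1 t (ν t / ν u) (Nat.div_dvd_of_dvd hd)).exists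
    have hself : ν t / (ν t / ν u) = ν u := Nat.div_div_self hd (hν.1 t).ne'
    have : u' = u := unique_below hν (hu't.trans ht) hu (by rw [hu', hself])
    rwa [← this]

lemma finD (hν : TP.IsTPNorm ν) (s : S) : {u : S | u ≤ s}.Finite := by
  apply Set.Finite.of_finite_image (f := ν)
  · apply Set.Finite.subset (Nat.divisors (ν s)).finite_toSet
    rintro d ⟨u, hu, rfl⟩
    exact Nat.mem_divisors.mpr ⟨hν.2.1 _ _ hu, (hν.1 s).ne'⟩
  · intro u hu u' hu' h
    exact unique_below hν hu hu' h

noncomputable def D (hν : TP.IsTPNorm ν) (s : S) : Finset S := (finD hν s).toFinset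

lemma mem_D (hν : TP.IsTPNorm ν) {s u : S} : u ∈ D hν s ↔ u ≤ s :=
  (finD hν s).mem_toFinset

lemma ghost_eq (hν : TP.IsTPNorm ν) {k : Type*} [CommRing k] (a : S → k) (s : S) :
    TP.ghost ν a s = ∑ u ∈ D hν s, (ν u : k) * a u ^ (ν s / ν u) := by
  have : {t : S | t ≤ s} = ↑(D hν s) := by ext u; simp [mem_D hν]
  rw [TP.ghost, this, finsum_mem_coe_finset]

end DworkAux


namespace DworkAux2

lemma pow_congr {k : Type*} [CommRing k] {p : ℕ} (hp : p.Prime) {b c : k}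
    (h : (p : k) ∣ b - c) (q : ℕ) :
    (p : k) ^ (padicValNat p q + 1) ∣ b ^ q - c ^ q := by
  rcases eq_or_ne q 0 with rfl | hq
  · simp
  have hfac : q.factorization p = padicValNat p q := Nat.factorization_def q hp
  set e := padicValNat p q with he
  have hqe : p ^ e * (q / p ^ e) = q := by rw [← hfac]; exact Nat.ordProj_mul_ordCompl_eq_self q p
  have h1 : (p : k) ^ (e + 1) ∣ b ^ p ^ e - c ^ p ^ e := dvd_sub_pow_of_dvd_sub h e
  have h2 : b ^ p ^ e - c ^ p ^ e ∣ b ^ q - c ^ q := by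
    conv_rhs => rw [← hqe]
    rw [pow_mul, pow_mul]
    exact sub_dvd_pow_sub_pow _ _ _
  exact h1.trans h2

lemma cast_dvd_of_prime_pow_dvd {k : Type*} [CommRing k] (y : k) :
    ∀ n : ℕ, 0 < n → (∀ p : ℕ, p.Prime → p ∣ n → ((p : k) ^ n.factorization p) ∣ y) →
      (n : k) ∣ y := by
  intro n
  induction n using Nat.recOnPrimePow with
  | zero => intro h; exact absurd h (lt_irrefl 0)
  | one => intro _ _; simp
  | prime_pow_mul a p e hp hpa he ih =>
    intro hpos hyp
    have ha : 0 < a := Nat.pos_of_ne_zero (by rintro rfl; simp at hpos)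
    have hfa : (p ^ e * a).factorization = (p ^ e).factorization + a.factorization :=
      Nat.factorization_mul (pow_ne_zero e hp.ne_zero) ha.ne'
    have h1 : ((p : k) ^ e) ∣ y := by
      have := hyp p hp (Dvd.dvd.mul_right (dvd_pow_self p he.ne') a)
      rwa [hfa, Finsupp.add_apply, hp.factorization_pow, Finsupp.single_eq_same,
        Nat.factorization_eq_zero_of_not_dvd hpa, add_zero] at this
    have h2 : (a : k) ∣ y := by
      refine ih ha (fun q hq hqa => ?_)
      have hqp : q ≠ p := by rintro rfl; exact hpa hqa
      have := hyp q hq (hqa.mul_left _)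
      rwa [hfa, Finsupp.add_apply, hp.factorization_pow,
        Finsupp.single_eq_of_ne' (fun hh => hqp hh.symm), zero_add] at this
    have hcop : IsCoprime ((p : k) ^ e) (a : k) := by
      have : Nat.Coprime (p ^ e) a := (Nat.Prime.coprime_iff_not_dvd hp).mpr hpa |>.pow_left e
      have := (Nat.isCoprime_iff_coprime.mpr this).map (Int.castRingHom k)
      simpa using this
    have := hcop.mul_dvd h1 h2
    simpa using this
end DworkAux2


section
variable {S : Type*} [PartialOrder S] {ν : S → ℕ} {k : Type*} [CommRing k]

-- padic valuation bookkeeping: ν s = p * ν t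
lemma val_succ {p : ℕ} (hp : p.Prime) {a b : ℕ} (ha : a ≠ 0) (h : b = p * a) :
    padicValNat p b = padicValNat p a + 1 := by
  haveI := Fact.mk hp
  rw [h, padicValNat.mul hp.ne_zero ha, padicValNat.self hp.one_lt, add_comm]

-- the key term divisibility for u ≤ t
lemma term_dvd {p : ℕ} (hp : p.Prime) {nu nt ns : ℕ} (hnu : nu ≠ 0) (hnt : nt ≠ 0) (hdut : nu ∣ nt)
    (hst : ns = p * nt) (b c : k) (hbc : (p : k) ∣ c - b ^ p) :
    (p : k) ^ padicValNat p ns ∣ (nu : k) * (c ^ (nt / nu) - b ^ (ns / nu)) := by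
  haveI := Fact.mk hp
  set q := nt / nu with hq
  have hq1 : nu * q = nt := Nat.mul_div_cancel' hdut
  have hq0 : q ≠ 0 := by rintro h; rw [h, mul_zero] at hq1; exact hnt hq1.symm
  have hsq : ns / nu = p * q := by
    have : ns = nu * (p * q) := by rw [hst, ← hq1]; ring
    rw [this, Nat.mul_div_cancel_left _ (Nat.pos_of_ne_zero hnu)]
  set j := padicValNat p nu with hj
  set e := padicValNat p q with he
  have hje : padicValNat p nt = j + e := by rw [← hq1, padicValNat.mul hnu hq0]
  have hm : padicValNat p ns = j + (e + 1) := by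
    rw [val_succ hp hnt hst, hje]; ring
  have h1 : (p : k) ^ (e + 1) ∣ c ^ q - (b ^ p) ^ q :=
    DworkAux2.pow_congr hp hbc q
  have h2 : (p : k) ^ j ∣ (nu : k) := by
    have : p ^ j ∣ nu := by
      rw [hj, ← Nat.factorization_def nu hp]; exact Nat.ordProj_dvd nu p
    exact_mod_cast Nat.cast_dvd_cast (α := k) this
  rw [hm, pow_add, hsq, pow_mul]
  exact mul_dvd_mul h2 h1

end

section
variable {S : Type*} [PartialOrder S] {ν : S → ℕ} {k : Type*} [CommRing k]

lemma outside_dvd {p nu nt ns : ℕ} (hp : p.Prime) (hnu : nu ≠ 0) (hnt : nt ≠ 0)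
    (hst : ns = p * nt) (hdus : nu ∣ ns) (hndut : ¬ nu ∣ nt) :
    p ^ padicValNat p ns ∣ nu := by
  by_contra h
  apply hndut
  have hns : ns ≠ 0 := by rw [hst]; exact mul_ne_zero hp.ne_zero hnt
  rw [← Nat.factorization_le_iff_dvd hnu hnt, Finsupp.le_def]
  intro q
  have hle := (Nat.factorization_le_iff_dvd hnu hns).mpr hdus
  have hfs : ns.factorization = p.factorization + nt.factorization := by
    rw [hst, Nat.factorization_mul hp.ne_zero hnt]
  by_cases hq : q = p
  · subst hq
    have h1 : nu.factorization q ≤ ns.factorization q := Finsupp.le_def.mp hle q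
    have h2 : ns.factorization q = nt.factorization q + 1 := by
      rw [hfs, Finsupp.add_apply, hp.factorization, Finsupp.single_eq_same, add_comm]
    have h3 : nu.factorization q ≠ ns.factorization q := by
      intro heq
      apply h
      rw [← Nat.factorization_def ns hp, ← heq]
      exact Nat.ordProj_dvd nu q
    omega
  · have h1 : nu.factorization q ≤ ns.factorization q := Finsupp.le_def.mp hle q
    have h2 : ns.factorization q = nt.factorization q := by
      rw [hfs, Finsupp.add_apply, hp.factorization,
        Finsupp.single_eq_of_ne' (fun hh => hq hh.symm), zero_add]
    omega

end


namespace DworkAux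

variable {S : Type*} [PartialOrder S] {ν : S → ℕ}

lemma norm_lt (hν : TP.IsTPNorm ν) {u s : S} (hus : u ≤ s) (hne : u ≠ s) : ν u < ν s :=
  lt_of_le_of_ne (Nat.le_of_dvd (hν.1 s) (hν.2.1 _ _ hus))
    (fun h => hne (eq_of_le_of_norm_eq hν hus h))

noncomputable def De (hν : TP.IsTPNorm ν) (s : S) : Finset S :=
  letI := Classical.decEq S
  (D hν s).erase s

lemma mem_De (hν : TP.IsTPNorm ν) {s u : S} : u ∈ De hν s ↔ u ≠ s ∧ u ≤ s := by
  letI := Classical.decEq S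
  simp [De, Finset.mem_erase, mem_D hν]

noncomputable def coeff (ν : S → ℕ) (hν : TP.IsTPNorm ν) {k : Type*} [CommRing k]
    (x : S → k) (s : S) : k :=
  Classical.epsilon fun c => (ν s : k) * c =
    x s - ∑ u ∈ (De hν s).attach,
      (ν u.1 : k) * (coeff ν hν x u.1) ^ (ν s / ν u.1)
termination_by ν s
decreasing_by
  have h2 := u.2
  rw [mem_De hν] at h2
  exact norm_lt hν h2.2 h2.1

lemma coeff_def (hν : TP.IsTPNorm ν) {k : Type*} [CommRing k] (x : S → k) (s : S) :
    coeff ν hν x s = Classical.epsilon fun c => (ν s : k) * c =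
      x s - ∑ u ∈ (De hν s).attach,
        (ν u.1 : k) * (coeff ν hν x u.1) ^ (ν s / ν u.1) := by
  rw [coeff]

end DworkAux


namespace DworkAux

variable {S : Type*} [PartialOrder S] {ν : S → ℕ} {k : Type*} [CommRing k]

lemma coeff_spec (hν : TP.IsTPNorm ν)
    (φ : ∀ p : ℕ, p.Prime → k →+* k)
    (hφ : ∀ (p : ℕ) (hp : p.Prime) (a : k), φ p hp a - a ^ p ∈ Ideal.span {(p : k)})
    (x : S → k)
    (H : ∀ (p : ℕ) (hp : p.Prime) (s t : S), p ∣ ν s → t ≤ s → ν t = ν s / p →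
        x s - φ p hp (x t) ∈ Ideal.span {(p : k) ^ padicValNat p (ν s)}) :
    ∀ (n : ℕ) (s : S), ν s ≤ n →
      (ν s : k) * coeff ν hν x s =
        x s - ∑ u ∈ De hν s, (ν u : k) * coeff ν hν x u ^ (ν s / ν u) := by
  intro n
  induction n with
  | zero => intro s hs; exact absurd hs (by have := hν.1 s; omega)
  | succ n ih =>
    intro s hs
    have hghost : ∀ u : S, u ≤ s → u ≠ s →
        (∑ v ∈ D hν u, (ν v : k) * coeff ν hν x v ^ (ν u / ν v)) = x u := by
      intro u hus hne
      letI := Classical.decEq S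
      have hlt : ν u < ν s := norm_lt hν hus hne
      have hspec := ih u (by omega)
      have hmem : u ∈ D hν u := (mem_D hν).mpr le_rfl
      have hsum := Finset.add_sum_erase (D hν u)
        (fun v => (ν v : k) * coeff ν hν x v ^ (ν u / ν v)) hmem
      have hDe : (D hν u).erase u = De hν u := by simp [De]
      rw [hDe] at hsum
      rw [← hsum]
      simp only [Nat.div_self (hν.1 u), pow_one]
      rw [hspec]
      ring
    have hex : ∃ c : k, (ν s : k) * c =
        x s - ∑ u ∈ (De hν s).attach, (ν u.1 : k) * coeff ν hν x u.1 ^ (ν s / ν u.1) := by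
      rw [Finset.sum_attach (De hν s) (fun v => (ν v : k) * coeff ν hν x v ^ (ν s / ν v))]
      set R := x s - ∑ u ∈ De hν s, (ν u : k) * coeff ν hν x u ^ (ν s / ν u) with hR
      suffices h : (ν s : k) ∣ R by obtain ⟨c, hc⟩ := h; exact ⟨c, hc.symm⟩
      apply DworkAux2.cast_dvd_of_prime_pow_dvd R (ν s) (hν.1 s)
      intro p hp hps
      rw [Nat.factorization_def _ hp]
      letI := Classical.decEq S
      obtain ⟨t, ⟨hts, htn⟩, -⟩ := hν.2.2.2.1 s p hps
      have hst : ν s = p * ν t := by rw [htn, Nat.mul_div_cancel' hps]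
      have htne : t ≠ s := by
        intro h; rw [h] at hst
        have h2 : 2 * ν s ≤ p * ν s := Nat.mul_le_mul_right _ hp.two_le
        have := hν.1 s; omega
      have hx : (p : k) ^ padicValNat p (ν s) ∣ x s - φ p hp (x t) :=
        Ideal.mem_span_singleton.mp (H p hp s t hps hts htn)
      have hxt : φ p hp (x t) =
          ∑ v ∈ D hν t, (ν v : k) * (φ p hp (coeff ν hν x v)) ^ (ν t / ν v) := by
        rw [← hghost t hts htne, map_sum]
        simp only [map_mul, map_natCast, map_pow]
      have hsub : D hν t ⊆ De hν s := by
        intro v hv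
        rw [mem_D hν] at hv
        rw [mem_De hν]
        refine ⟨?_, hv.trans hts⟩
        rintro rfl
        exact htne (le_antisymm hts hv)
      have hsplit := Finset.sum_sdiff
        (f := fun v => (ν v : k) * coeff ν hν x v ^ (ν s / ν v)) hsub
      have hkey : R = (x s - φ p hp (x t))
          + (∑ v ∈ D hν t, ((ν v : k) * (φ p hp (coeff ν hν x v)) ^ (ν t / ν v)
              - (ν v : k) * coeff ν hν x v ^ (ν s / ν v)))
          - ∑ v ∈ De hν s \ D hν t, (ν v : k) * coeff ν hν x v ^ (ν s / ν v) := by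
        rw [hR, ← hsplit, hxt, Finset.sum_sub_distrib]
        ring
      rw [hkey]
      refine dvd_sub (dvd_add hx (Finset.dvd_sum ?_)) (Finset.dvd_sum ?_)
      · intro v hv
        rw [mem_D hν] at hv
        have hb : (p : k) ∣ φ p hp (coeff ν hν x v) - (coeff ν hν x v) ^ p :=
          Ideal.mem_span_singleton.mp (hφ p hp _)
        have hterm := term_dvd hp (hν.1 v).ne' (hν.1 t).ne' (hν.2.1 _ _ hv) hst
          (coeff ν hν x v) (φ p hp (coeff ν hν x v)) hb
        rwa [mul_sub] at hterm
      · intro v hv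
        rw [Finset.mem_sdiff, mem_De hν, mem_D hν] at hv
        obtain ⟨⟨hvne, hvs⟩, hvnt⟩ := hv
        have hnd : ¬ ν v ∣ ν t := fun hd => hvnt ((le_iff_dvd hν hvs hts).mpr hd)
        have hout := outside_dvd hp (hν.1 v).ne' (hν.1 t).ne' hst (hν.2.1 _ _ hvs) hnd
        exact Dvd.dvd.mul_right (by exact_mod_cast Nat.cast_dvd_cast (α := k) hout) _
    rw [coeff_def hν x s, ← Finset.sum_attach (De hν s)
      (fun v => (ν v : k) * coeff ν hν x v ^ (ν s / ν v))]
    exact Classical.epsilon_spec hex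

lemma ghost_coeff (hν : TP.IsTPNorm ν)
    (φ : ∀ p : ℕ, p.Prime → k →+* k)
    (hφ : ∀ (p : ℕ) (hp : p.Prime) (a : k), φ p hp a - a ^ p ∈ Ideal.span {(p : k)})
    (x : S → k)
    (H : ∀ (p : ℕ) (hp : p.Prime) (s t : S), p ∣ ν s → t ≤ s → ν t = ν s / p →
        x s - φ p hp (x t) ∈ Ideal.span {(p : k) ^ padicValNat p (ν s)}) :
    TP.ghost ν (coeff ν hν x) = x := by
  funext s
  rw [ghost_eq hν]
  letI := Classical.decEq S
  have hmem : s ∈ D hν s := (mem_D hν).mpr le_rfl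
  have hsum := Finset.add_sum_erase (D hν s)
    (fun v => (ν v : k) * coeff ν hν x v ^ (ν s / ν v)) hmem
  have hDe : (D hν s).erase s = De hν s := by simp [De]
  rw [hDe] at hsum
  rw [← hsum]
  simp only [Nat.div_self (hν.1 s), pow_one]
  rw [coeff_spec hν φ hφ x H (ν s) s le_rfl]
  ring

end DworkAux



/-- Dwork's lemma for truncation posets: given ring endomorphisms `φ_p` lifting
Frobenius mod `p`, a vector `x` is in the image of the ghost map iff
`x_s ≡ φ_p (x_{s/p}) mod p^{v_p(|s|)}` for all primes `p` dividing `|s|`. -/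
theorem stmt3 {S : Type*} [PartialOrder S] (ν : S → ℕ) (hν : TP.IsTPNorm ν)
    {k : Type*} [CommRing k]
    (φ : ∀ p : ℕ, p.Prime → k →+* k)
    (hφ : ∀ (p : ℕ) (hp : p.Prime) (a : k), φ p hp a - a ^ p ∈ Ideal.span {(p : k)})
    (x : S → k) :
    (∃ a : S → k, TP.ghost ν a = x) ↔
      ∀ (p : ℕ) (hp : p.Prime) (s t : S), p ∣ ν s → t ≤ s → ν t = ν s / p →
        x s - φ p hp (x t) ∈ Ideal.span {(p : k) ^ padicValNat p (ν s)} := by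
  constructor
  · rintro ⟨a, rfl⟩ p hp s t hps hts htn
    rw [Ideal.mem_span_singleton]
    letI := Classical.decEq S
    have hst : ν s = p * ν t := by rw [htn, Nat.mul_div_cancel' hps]
    rw [DworkAux.ghost_eq hν, DworkAux.ghost_eq hν]
    have hφt : φ p hp (∑ v ∈ DworkAux.D hν t, (ν v : k) * a v ^ (ν t / ν v)) =
        ∑ v ∈ DworkAux.D hν t, (ν v : k) * (φ p hp (a v)) ^ (ν t / ν v) := by
      rw [map_sum]; simp only [map_mul, map_natCast, map_pow]
    rw [hφt]
    have hsub : DworkAux.D hν t ⊆ DworkAux.D hν s := fun v hv =>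
      (DworkAux.mem_D hν).mpr (((DworkAux.mem_D hν).mp hv).trans hts)
    have hsplit := Finset.sum_sdiff (f := fun v => (ν v : k) * a v ^ (ν s / ν v)) hsub
    have hkey : (∑ v ∈ DworkAux.D hν s, (ν v : k) * a v ^ (ν s / ν v)) -
        ∑ v ∈ DworkAux.D hν t, (ν v : k) * (φ p hp (a v)) ^ (ν t / ν v)
        = (∑ v ∈ DworkAux.D hν s \ DworkAux.D hν t, (ν v : k) * a v ^ (ν s / ν v))
          + ∑ v ∈ DworkAux.D hν t, ((ν v : k) * a v ^ (ν s / ν v)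
              - (ν v : k) * (φ p hp (a v)) ^ (ν t / ν v)) := by
      rw [← hsplit, Finset.sum_sub_distrib]
      ring
    rw [hkey]
    refine dvd_add (Finset.dvd_sum ?_) (Finset.dvd_sum ?_)
    · intro v hv
      rw [Finset.mem_sdiff, DworkAux.mem_D hν, DworkAux.mem_D hν] at hv
      obtain ⟨hvs, hvnt⟩ := hv
      have hnd : ¬ ν v ∣ ν t := fun hd => hvnt ((DworkAux.le_iff_dvd hν hvs hts).mpr hd)
      have hout := outside_dvd hp (hν.1 v).ne' (hν.1 t).ne' hst (hν.2.1 _ _ hvs) hnd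
      exact Dvd.dvd.mul_right (by exact_mod_cast Nat.cast_dvd_cast (α := k) hout) _
    · intro v hv
      rw [DworkAux.mem_D hν] at hv
      have hb : (p : k) ∣ φ p hp (a v) - (a v) ^ p :=
        Ideal.mem_span_singleton.mp (hφ p hp _)
      have hterm := term_dvd hp (hν.1 v).ne' (hν.1 t).ne' (hν.2.1 _ _ hv) hst
        (a v) (φ p hp (a v)) hb
      rw [mul_sub] at hterm
      have h2 := dvd_neg.mpr hterm
      rwa [neg_sub] at h2
  · intro H
    exact ⟨DworkAux.coeff ν hν x, DworkAux.ghost_coeff hν φ hφ x H⟩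
end

section
/- Classical Dwork lemma: Let S ⊂ ℕ be a set closed under division, k a commutative ring, and for each prime p let φ_p : k → k be a ring homomorphism with φ_p(a) ≡ a^p (mod p k). Then ⟨x_s⟩ ∈ k^S is in the image of the ghost map (a_s) ↦ ⟨Σ_{d|s} d·a_d^{s/d}⟩ if and only if x_s ≡ φ_p(x_{s/p}) (mod p^{v_p(s)} k) for every prime p and every s ∈ S divisible by p. -/
section DworkAux

variable {k : Type*} [CommRing k]

/-- If `a ≡ b mod p`, then `a^m ≡ b^m mod p^(v_p(m)+1)`. -/
lemma dwork_pow_cong {p : ℕ} {a b : k} (h : (p : k) ∣ a - b) {m : ℕ} (hm : m ≠ 0) :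
    (p : k) ^ (padicValNat p m + 1) ∣ a ^ m - b ^ m := by
  set v := padicValNat p m with hv
  obtain ⟨m', hm'⟩ := (pow_padicValNat_dvd : p ^ v ∣ m)
  have h1 : (p : k) ^ (v + 1) ∣ a ^ p ^ v - b ^ p ^ v := dvd_sub_pow_of_dvd_sub h v
  have h2 : a ^ p ^ v - b ^ p ^ v ∣ (a ^ p ^ v) ^ m' - (b ^ p ^ v) ^ m' :=
    sub_dvd_pow_sub_pow _ _ m'
  have := h1.trans h2
  rwa [← pow_mul, ← pow_mul, ← hm'] at this

/-- Divisors of `s` not dividing `s/p` are divisible by `p^(v_p s)`. -/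
lemma dwork_bad_divisor {p s d : ℕ} (hp : p.Prime) (hps : p ∣ s) (hs : s ≠ 0)
    (hd : d ∣ s) (hnd : ¬ d ∣ s / p) : p ^ padicValNat p s ∣ d := by
  have hd0 : d ≠ 0 := by rintro rfl; exact hs (Nat.eq_zero_of_zero_dvd hd)
  by_contra hcon
  rw [← Nat.factorization_def s hp, hp.pow_dvd_iff_le_factorization hd0, not_le] at hcon
  apply hnd
  rw [Nat.dvd_div_iff_mul_dvd hps]
  rw [← Nat.factorization_le_iff_dvd (mul_ne_zero hp.ne_zero hd0) hs,
    Nat.factorization_mul hp.ne_zero hd0]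
  intro q
  rcases eq_or_ne q p with rfl | hq
  · simp only [Finsupp.coe_add, Pi.add_apply, hp.factorization_self]
    omega
  · have h1 : p.factorization q = 0 := by
      rw [hp.factorization, Finsupp.single_apply, if_neg (fun h => hq h.symm)]
    have h2 := (Nat.factorization_le_iff_dvd hd0 hs).mpr hd q
    simp only [Finsupp.coe_add, Pi.add_apply, h1]
    omega

/-- The key ghost congruence. -/
lemma dwork_key {p s : ℕ} (hp : p.Prime) (hps : p ∣ s) (hs : s ≠ 0)
    (φp : k →+* k) (hφp : ∀ a : k, (p : k) ∣ φp a - a ^ p) (a : ℕ → k) :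
    (p : k) ^ padicValNat p s ∣
      (∑ d ∈ s.divisors, (d : k) * a d ^ (s / d))
        - φp (∑ d ∈ (s / p).divisors, (d : k) * a d ^ (s / p / d)) := by
  haveI : Fact p.Prime := ⟨hp⟩
  have hsp0 : s / p ≠ 0 := (Nat.div_pos (Nat.le_of_dvd (Nat.pos_of_ne_zero hs) hps) hp.pos).ne'
  have hsplit : ∑ d ∈ s.divisors, (d : k) * a d ^ (s / d)
      = (∑ d ∈ s.divisors.filter (· ∣ s / p), (d : k) * a d ^ (s / d))
        + ∑ d ∈ s.divisors.filter (¬ · ∣ s / p), (d : k) * a d ^ (s / d) :=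
    (Finset.sum_filter_add_sum_filter_not _ _ _).symm
  rw [Nat.divisors_filter_dvd_of_dvd hs (Nat.div_dvd_of_dvd hps)] at hsplit
  rw [hsplit, map_sum]
  have hgood : ∀ e ∈ (s / p).divisors,
      (p : k) ^ padicValNat p s ∣
        (e : k) * a e ^ (s / e) - φp ((e : k) * a e ^ (s / p / e)) := by
    intro e he
    rw [Nat.mem_divisors] at he
    obtain ⟨⟨m, hem⟩, -⟩ := he
    have he0 : e ≠ 0 := by rintro rfl; exact hsp0 (by simpa using hem)
    have hm0 : m ≠ 0 := by rintro rfl; exact hsp0 (by simpa using hem)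
    have hme : s / p / e = m := by rw [hem, Nat.mul_div_cancel_left _ (Nat.pos_of_ne_zero he0)]
    have hse : s / e = p * m := by
      have : s = e * (p * m) := by
        rw [← Nat.div_mul_cancel hps, hem]; ring
      rw [this, Nat.mul_div_cancel_left _ (Nat.pos_of_ne_zero he0)]
    have hv : padicValNat p s = padicValNat p e + (padicValNat p m + 1) := by
      have h1 : s = e * m * p := by
        rw [← Nat.div_mul_cancel hps, hem]
      rw [h1, padicValNat.mul (mul_ne_zero he0 hm0) hp.ne_zero,
        padicValNat.mul he0 hm0, padicValNat.self hp.one_lt]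
      omega
    have h2 : (p : k) ^ (padicValNat p m + 1) ∣ a e ^ (s / e) - φp (a e) ^ (s / p / e) := by
      rw [hme, hse, pow_mul]
      exact dwork_pow_cong (dvd_sub_comm.mp (hφp (a e))) hm0
    have h3 : (p : k) ^ padicValNat p e ∣ (e : k) := by
      have := pow_padicValNat_dvd (p := p) (n := e)
      exact_mod_cast Nat.cast_dvd_cast (α := k) this
    rw [map_mul, map_pow, map_natCast]
    calc (p : k) ^ padicValNat p s
        = (p : k) ^ padicValNat p e * (p : k) ^ (padicValNat p m + 1) := by
          rw [hv, pow_add]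
      _ ∣ (e : k) * (a e ^ (s / e) - φp (a e) ^ (s / p / e)) := mul_dvd_mul h3 h2
      _ = (e : k) * a e ^ (s / e) - (e : k) * φp (a e) ^ (s / p / e) := by ring
  have hbad : ∀ d ∈ s.divisors.filter (¬ · ∣ s / p),
      (p : k) ^ padicValNat p s ∣ (d : k) * a d ^ (s / d) := by
    intro d hd
    rw [Finset.mem_filter, Nat.mem_divisors] at hd
    have := dwork_bad_divisor hp hps hs hd.1.1 hd.2
    have hcast : (p : k) ^ padicValNat p s ∣ (d : k) := by
      have : ((p ^ padicValNat p s : ℕ) : k) ∣ (d : k) := Nat.cast_dvd_cast this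
      simpa using this
    exact hcast.mul_right _
  have heq : (∑ d ∈ (s / p).divisors, (d : k) * a d ^ (s / d))
        + (∑ d ∈ Finset.filter (fun x => ¬x ∣ s / p) s.divisors, (d : k) * a d ^ (s / d))
        - ∑ e ∈ (s / p).divisors, φp ((e : k) * a e ^ (s / p / e))
      = (∑ e ∈ (s / p).divisors,
          ((e : k) * a e ^ (s / e) - φp ((e : k) * a e ^ (s / p / e))))
        + ∑ d ∈ Finset.filter (fun x => ¬x ∣ s / p) s.divisors, (d : k) * a d ^ (s / d) := by
    rw [Finset.sum_sub_distrib]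
    ring
  rw [heq]
  exact dvd_add (Finset.dvd_sum hgood) (Finset.dvd_sum hbad)

/-- Combine coprime divisibilities. -/
lemma dwork_coprime_combine {m n : ℕ} (h : Nat.Coprime m n) {y : k}
    (hm : (m : k) ∣ y) (hn : (n : k) ∣ y) : ((m * n : ℕ) : k) ∣ y := by
  obtain ⟨u, v, huv⟩ := h.isCoprime
  obtain ⟨c, hc⟩ := hm
  obtain ⟨d, hd⟩ := hn
  have h2 : (u : k) * m + (v : k) * n = 1 := by
    have := congrArg (Int.cast : ℤ → k) huv
    push_cast at this
    exact this
  refine ⟨(u : k) * d + (v : k) * c, ?_⟩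
  push_cast
  linear_combination (-y) * h2 + ((u : k) * m) * hd + ((v : k) * n) * hc

/-- If divisible by every `p^(v_p n)`, then divisible by `n`. -/
lemma dwork_crt : ∀ n : ℕ, n ≠ 0 → ∀ y : k,
    (∀ p : ℕ, p.Prime → p ∣ n → (p : k) ^ n.factorization p ∣ y) → (n : k) ∣ y := by
  intro n
  induction n using Nat.strong_induction_on with
  | _ n IH =>
    intro hn y h
    rcases eq_or_ne n 1 with rfl | hn1
    · simpa using ⟨y, (one_mul y).symm⟩
    have hp : n.minFac.Prime := Nat.minFac_prime hn1
    set p := n.minFac with hpdef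
    have hpn : p ∣ n := Nat.minFac_dvd n
    set e := n.factorization p with he
    have he1 : 1 ≤ e := hp.factorization_pos_of_dvd hn hpn
    set m := ordCompl[p] n with hm
    have hm0 : m ≠ 0 := (Nat.ordCompl_pos p hn).ne'
    have hmn : m < n := by
      rw [hm]
      apply Nat.div_lt_self (Nat.pos_of_ne_zero hn)
      calc 1 < p := hp.one_lt
        _ ≤ p ^ e := Nat.le_self_pow (by omega) p
    have hmdvd : m ∣ n := Nat.ordCompl_dvd n p
    have hy_m : (m : k) ∣ y := by
      apply IH m hmn hm0
      intro q hq hqm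
      have hqn : q ∣ n := hqm.trans hmdvd
      have hle : m.factorization q ≤ n.factorization q :=
        (Nat.factorization_le_iff_dvd hm0 hn).mpr hmdvd q
      exact (pow_dvd_pow (q : k) hle).trans (h q hq hqn)
    have hy_p : ((p ^ e : ℕ) : k) ∣ y := by
      push_cast
      exact h p hp hpn
    have hcop : Nat.Coprime (p ^ e) m :=
      (Nat.coprime_ordCompl hp hn).pow_left e
    have := dwork_coprime_combine hcop hy_p hy_m
    rwa [Nat.ordProj_mul_ordCompl_eq_self n p] at this

open Classical in
/-- Recursive construction of ghost components. -/
noncomputable def dworkAux {k : Type*} [CommRing k] (x : ℕ → k) (n : ℕ) : k :=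
  if h : ∃ b : k, (n : k) * b =
      x n - ∑ d ∈ (n.divisors.erase n).attach, (d.1 : k) * (dworkAux x d.1) ^ (n / d.1)
  then h.choose else 0
decreasing_by
  all_goals
    have hd := d.2
    rw [Finset.mem_erase, Nat.mem_divisors] at hd
    exact lt_of_le_of_ne (Nat.le_of_dvd (Nat.pos_of_ne_zero hd.2.2) hd.2.1) hd.1

lemma dworkAux_spec (x : ℕ → k) (n : ℕ)
    (h : ∃ b : k, (n : k) * b =
      x n - ∑ d ∈ n.divisors.erase n, (d : k) * (dworkAux x d) ^ (n / d)) :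
    (n : k) * dworkAux x n =
      x n - ∑ d ∈ n.divisors.erase n, (d : k) * (dworkAux x d) ^ (n / d) := by
  rw [dworkAux]
  rw [Finset.sum_attach (n.divisors.erase n) (fun d => (d : k) * (dworkAux x d) ^ (n / d))]
  rw [dif_pos h]
  exact h.choose_spec

end DworkAux

/-- Classical Dwork lemma for an ordinary truncation set `S ⊆ ℕ`. -/
theorem stmt4 (S : Set ℕ) (hpos : ∀ s ∈ S, 0 < s)
    (hdvd : ∀ s ∈ S, ∀ d : ℕ, d ∣ s → 0 < d → d ∈ S)
    {k : Type*} [CommRing k]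
    (φ : ∀ p : ℕ, p.Prime → k →+* k)
    (hφ : ∀ (p : ℕ) (hp : p.Prime) (a : k), φ p hp a - a ^ p ∈ Ideal.span {(p : k)})
    (x : ℕ → k) :
    (∃ a : ℕ → k, ∀ s ∈ S, x s = ∑ d ∈ s.divisors, (d : k) * a d ^ (s / d)) ↔
      ∀ (p : ℕ) (hp : p.Prime), ∀ s ∈ S, p ∣ s →
        x s - φ p hp (x (s / p)) ∈ Ideal.span {(p : k) ^ padicValNat p s} := by
  have hφ' : ∀ (p : ℕ) (hp : p.Prime) (a : k), (p : k) ∣ φ p hp a - a ^ p := by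
    intro p hp a
    exact Ideal.mem_span_singleton.mp (hφ p hp a)
  constructor
  · rintro ⟨a, ha⟩ p hp s hs hps
    have hs0 : s ≠ 0 := (hpos s hs).ne'
    have hsp : s / p ∈ S :=
      hdvd s hs (s / p) (Nat.div_dvd_of_dvd hps)
        (Nat.div_pos (Nat.le_of_dvd (hpos s hs) hps) hp.pos)
    rw [ha s hs, ha (s / p) hsp, Ideal.mem_span_singleton]
    exact dwork_key hp hps hs0 (φ p hp) (hφ' p hp) a
  · intro hx
    set a : ℕ → k := dworkAux x with hadef
    refine ⟨a, ?_⟩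
    intro s
    induction s using Nat.strong_induction_on with
    | _ n IH =>
      intro hn
      have hn0 : n ≠ 0 := (hpos n hn).ne'
      have hmem : n ∈ n.divisors := Nat.mem_divisors_self n hn0
      have hsum : ∑ d ∈ n.divisors, (d : k) * a d ^ (n / d)
          = (∑ d ∈ n.divisors.erase n, (d : k) * a d ^ (n / d)) + (n : k) * a n := by
        rw [← Finset.sum_erase_add _ _ hmem, Nat.div_self (hpos n hn), pow_one]
      have hdvd_y : (n : k) ∣ x n - ∑ d ∈ n.divisors.erase n, (d : k) * a d ^ (n / d) := by
        apply dwork_crt n hn0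
        intro p hp hpn
        rw [Nat.factorization_def n hp]
        have hnp_mem : n / p ∈ S :=
          hdvd n hn (n / p) (Nat.div_dvd_of_dvd hpn)
            (Nat.div_pos (Nat.le_of_dvd (hpos n hn) hpn) hp.pos)
        have hnp_lt : n / p < n := Nat.div_lt_self (hpos n hn) hp.one_lt
        have hIH : x (n / p) = ∑ d ∈ (n / p).divisors, (d : k) * a d ^ (n / p / d) :=
          IH (n / p) hnp_lt hnp_mem
        have h1 : (p : k) ^ padicValNat p n ∣ x n - φ p hp (x (n / p)) :=
          Ideal.mem_span_singleton.mp (hx p hp n hn hpn)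
        have h2 : (p : k) ^ padicValNat p n ∣
            (∑ d ∈ n.divisors, (d : k) * a d ^ (n / d))
              - φ p hp (∑ d ∈ (n / p).divisors, (d : k) * a d ^ (n / p / d)) :=
          dwork_key hp hpn hn0 (φ p hp) (hφ' p hp) a
        have h3 : (p : k) ^ padicValNat p n ∣ (n : k) * a n := by
          have hnat : p ^ padicValNat p n ∣ n := by
            apply dwork_bad_divisor hp hpn hn0 dvd_rfl
            intro hcon
            exact absurd (Nat.le_of_dvd (Nat.div_pos (Nat.le_of_dvd (hpos n hn) hpn)
              hp.pos) hcon) (not_le.mpr hnp_lt)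
          have : ((p ^ padicValNat p n : ℕ) : k) ∣ (n : k) := Nat.cast_dvd_cast hnat
          simp only [Nat.cast_pow] at this
          exact this.mul_right _
        have heq : x n - ∑ d ∈ n.divisors.erase n, (d : k) * a d ^ (n / d)
            = (x n - φ p hp (x (n / p)))
              - ((∑ d ∈ n.divisors, (d : k) * a d ^ (n / d))
                - φ p hp (∑ d ∈ (n / p).divisors, (d : k) * a d ^ (n / p / d)))
              + (n : k) * a n := by
          rw [← hIH, hsum]; ring
        rw [heq]
        exact dvd_add (dvd_sub h1 h2) h3
      obtain ⟨c, hc⟩ := hdvd_y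
      have hspec := dworkAux_spec x n ⟨c, hc.symm⟩
      rw [← hadef] at hspec
      rw [hsum]
      linear_combination -hspec
end

section
/- Existence of the restriction/Frobenius map: Let f : S → T be a map of truncation posets (i.e., s₁ | s₂ implies f(s₁) | f(s₂) and |f(s₂)|/|f(s₁)| = |s₂|/|s₁|) and k a commutative ring. Then for every Witt vector (a_t) ∈ W_T(k), the vector ⟨y_s⟩ ∈ k^S defined by y_s = x_{f(s)}, where ⟨x_t⟩ = w(a_t), lies in the image of the ghost map w : W_S(k) → k^S. Consequently there is a unique natural (in k) map f* : W_T(k) → W_S(k) covering the map f*_w : k^T → k^S on ghost coordinates. -/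
namespace TPAux
open TP MvPolynomial
open scoped Classical

section Norm
variable {S : Type} [PartialOrder S] (ν : S → ℕ) (h : IsTPNorm ν)
include h

lemma eq_of_le_norm {t t' s : S} (ht : t ≤ s) (ht' : t' ≤ s) (he : ν t = ν t') : t = t' := by
  have hd := h.2.1 t s ht
  have hd' := h.2.1 t' s ht'
  obtain ⟨u, hu, huniq⟩ := h.2.2.2.1 s (ν s / ν t) (Nat.div_dvd_of_dvd hd)
  have hsel : ν s / (ν s / ν t) = ν t := Nat.div_div_self hd (h.1 s).ne'
  have h1 : t = u := huniq t ⟨ht, hsel.symm⟩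
  have h2 : t' = u := huniq t' ⟨ht', by rw [hsel]; exact he.symm⟩
  rw [h1, h2]

lemma below_finite (s : S) : {t | t ≤ s}.Finite := by
  have hinj : Set.InjOn ν {t | t ≤ s} := fun t ht t' ht' he => eq_of_le_norm ν h ht ht' he
  have himg : ν '' {t | t ≤ s} ⊆ Set.Iic (ν s) := by
    rintro _ ⟨t, ht, rfl⟩
    exact Nat.le_of_dvd (h.1 s) (h.2.1 t s ht)
  exact Set.Finite.of_finite_image ((Set.finite_Iic _).subset himg) hinj

noncomputable def dF (s : S) : Finset S := (below_finite ν h s).toFinset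

lemma mem_dF {t s : S} : t ∈ dF ν h s ↔ t ≤ s := by simp [dF]

lemma ghost_eq {k : Type*} [CommRing k] (a : S → k) (s : S) :
    ghost ν a s = ∑ t ∈ dF ν h s, (ν t : k) * a t ^ (ν s / ν t) := by
  have hset : {t : S | t ≤ s} = ↑(dF ν h s) := by ext t; simp [dF]
  simp only [ghost, hset, finsum_mem_coe_finset]

lemma norm_lt {t s : S} (ht : t ≤ s) (hne : t ≠ s) : ν t < ν s := by
  refine Nat.lt_of_le_of_ne (Nat.le_of_dvd (h.1 s) (h.2.1 t s ht)) fun hc => ?_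
  exact hne (eq_of_le_norm ν h ht le_rfl hc)

lemma ghost_split {k : Type*} [CommRing k] (a : S → k) (s : S) :
    ghost ν a s = (ν s : k) * a s +
      ∑ t ∈ (dF ν h s).erase s, (ν t : k) * a t ^ (ν s / ν t) := by
  rw [ghost_eq ν h, ← Finset.add_sum_erase _ _ ((mem_dF ν h).2 le_rfl),
    Nat.div_self (h.1 s), pow_one]

lemma ghost_natural {k₁ k₂ : Type*} [CommRing k₁] [CommRing k₂] (g : k₁ →+* k₂)
    (a : S → k₁) (s : S) : ghost ν (fun t => g (a t)) s = g (ghost ν a s) := by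
  rw [ghost_eq ν h, ghost_eq ν h, map_sum]
  exact Finset.sum_congr rfl fun t _ => by rw [map_mul, map_pow, map_natCast]

lemma ghost_congr {k : Type*} [CommRing k] {a b : S → k} {s : S}
    (hab : ∀ t, t ≤ s → a t = b t) : ghost ν a s = ghost ν b s := by
  rw [ghost_eq ν h, ghost_eq ν h]
  exact Finset.sum_congr rfl fun t ht => by rw [hab t ((mem_dF ν h).1 ht)]

lemma le_of_dvd_le {t s' s : S} (hts : t ≤ s) (hs' : s' ≤ s) (hd : ν t ∣ ν s') : t ≤ s' := by
  obtain ⟨u, ⟨hu1, hu2⟩, _⟩ := h.2.2.2.1 s' (ν s' / ν t) (Nat.div_dvd_of_dvd hd)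
  have hsel : ν s' / (ν s' / ν t) = ν t := Nat.div_div_self hd (h.1 s').ne'
  rw [hsel] at hu2
  rwa [eq_of_le_norm ν h hts (hu1.trans hs') hu2.symm]

lemma exists_le_norm {s : S} {d : ℕ} (hd : d ∣ ν s) : ∃ t, t ≤ s ∧ ν t = ν s / d :=
  ((h.2.2.2.1 s d hd).exists)

lemma ghost_injective {k : Type*} [CommRing k] [IsDomain k] [CharZero k] {a b : S → k}
    (hab : ∀ s, ghost ν a s = ghost ν b s) : ∀ s, a s = b s := by
  suffices H : ∀ n, ∀ s : S, ν s < n → a s = b s by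
    exact fun s => H (ν s + 1) s (Nat.lt_succ_self _)
  intro n
  induction n with
  | zero => exact fun s hs => absurd hs (Nat.not_lt_zero _)
  | succ n IH =>
  intro s hsn
  have hs := hab s
  rw [ghost_split ν h, ghost_split ν h] at hs
  have hsum : ∑ t ∈ (dF ν h s).erase s, (ν t : k) * a t ^ (ν s / ν t)
      = ∑ t ∈ (dF ν h s).erase s, (ν t : k) * b t ^ (ν s / ν t) := by
    refine Finset.sum_congr rfl fun t ht => ?_
    have hlt : ν t < n := lt_of_lt_of_le (norm_lt ν h ((mem_dF ν h).1
      (Finset.mem_of_mem_erase ht)) (Finset.ne_of_mem_erase ht)) (Nat.lt_succ_iff.1 hsn)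
    rw [IH t hlt]
  rw [hsum] at hs
  exact mul_left_cancel₀ (Nat.cast_ne_zero.2 (h.1 s).ne') (add_right_cancel hs)

end Norm

lemma ordProj_dvd_of_not_dvd_div {a n p : ℕ} (hp : p.Prime) (hn : n ≠ 0)
    (h1 : a ∣ n) (h2 : ¬ a ∣ n / p) : p ^ n.factorization p ∣ a := by
  obtain ⟨m, rfl⟩ := h1
  have ha : a ≠ 0 := by rintro rfl; simp at hn
  have hm : m ≠ 0 := by rintro rfl; simp at hn
  have hpm : ¬ p ∣ m := by
    intro hpm
    obtain ⟨m', rfl⟩ := hpm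
    exact h2 ⟨m', by rw [show a * (p * m') = a * m' * p by ring, Nat.mul_div_cancel _ hp.pos]⟩
  have hfac : (a * m).factorization p = a.factorization p := by
    rw [Nat.factorization_mul ha hm, Finsupp.add_apply,
      Nat.factorization_eq_zero_of_not_dvd hpm, add_zero]
  rw [hfac]
  exact Nat.ordProj_dvd a p

lemma natCast_dvd_of_prime_pow {n : ℕ} (hn : n ≠ 0) {R : Type*} [CommRing R] {z : R}
    (hz : ∀ p : ℕ, p.Prime → (p : R) ^ n.factorization p ∣ z) : (n : R) ∣ z := by
  have h1 : ∏ p ∈ n.primeFactors, p ^ n.factorization p = n := by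
    rw [← Nat.support_factorization]
    exact Nat.factorization_prod_pow_eq_self hn
  have hcast : (n : R) = ∏ p ∈ n.primeFactors, (p : R) ^ n.factorization p := by
    conv_lhs => rw [← h1]
    push_cast
    rfl
  rw [hcast]
  refine Finset.prod_dvd_of_coprime ?_ fun p hpmem => hz p (Nat.prime_of_mem_primeFactors hpmem)
  intro p hp q hq hne
  have hp' := Nat.prime_of_mem_primeFactors hp
  have hq' := Nat.prime_of_mem_primeFactors hq
  have hcop : Nat.Coprime (p ^ n.factorization p) (q ^ n.factorization q) :=
    Nat.Coprime.pow _ _ ((Nat.coprime_primes hp' hq').2 hne)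
  have := hcop.cast (R := R)
  simpa [Function.onFun] using this

lemma pow_succ_dvd_pow_sub_pow {R : Type*} [CommRing R] {p : ℕ} (hp : p.Prime) {a b : R}
    (h : (p : R) ∣ a - b) {m : ℕ} (hm : m ≠ 0) :
    (p : R) ^ (m.factorization p + 1) ∣ a ^ m - b ^ m := by
  set k := m.factorization p with hk
  obtain ⟨m', hm'⟩ := Nat.ordProj_dvd m p
  have h1 : (p : R) ^ (k + 1) ∣ a ^ p ^ k - b ^ p ^ k := dvd_sub_pow_of_dvd_sub h k
  calc (p : R) ^ (k + 1) ∣ a ^ p ^ k - b ^ p ^ k := h1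
    _ ∣ (a ^ p ^ k) ^ m' - (b ^ p ^ k) ^ m' := sub_dvd_pow_sub_pow _ _ _
    _ = a ^ m - b ^ m := by rw [← pow_mul, ← pow_mul, ← hm']

lemma frob_dvd {T : Type} {p : ℕ} (hp : p.Prime) (q : MvPolynomial T ℤ) :
    (p : MvPolynomial T ℤ) ∣ q ^ p - expand p q := by
  haveI : Fact p.Prime := ⟨hp⟩
  rw [← map_natCast (C : ℤ →+* MvPolynomial T ℤ) p, C_dvd_iff_zmod, map_sub, map_pow,
    map_expand, expand_zmod, sub_self]


/-! ### The solver over a ℚ-algebra -/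

noncomputable def solve {S : Type} [PartialOrder S] (ν : S → ℕ) (h : IsTPNorm ν)
    {k : Type*} [CommRing k] [Algebra ℚ k] (w : S → k) : S → k
  | s => algebraMap ℚ k ((ν s : ℚ)⁻¹) *
      (w s - ∑ t ∈ ((dF ν h s).erase s).attach,
        (ν t.1 : k) * solve ν h w t.1 ^ (ν s / ν t.1))
  termination_by s => ν s
  decreasing_by
    exact norm_lt ν h ((mem_dF ν h).1 (Finset.mem_of_mem_erase t.2)) (Finset.ne_of_mem_erase t.2)

lemma solve_eq {S : Type} [PartialOrder S] (ν : S → ℕ) (h : IsTPNorm ν)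
    {k : Type*} [CommRing k] [Algebra ℚ k] (w : S → k) (s : S) :
    solve ν h w s = algebraMap ℚ k ((ν s : ℚ)⁻¹) *
      (w s - ∑ t ∈ (dF ν h s).erase s, (ν t : k) * solve ν h w t ^ (ν s / ν t)) := by
  rw [solve, ← Finset.sum_attach ((dF ν h s).erase s)
    (fun t => (ν t : k) * solve ν h w t ^ (ν s / ν t))]

lemma inv_cast_mul {k : Type*} [CommRing k] [Algebra ℚ k] {m : ℕ} (hm : m ≠ 0) :
    algebraMap ℚ k ((m : ℚ)⁻¹) * (m : k) = 1 := by
  rw [show ((m : ℕ) : k) = algebraMap ℚ k ((m : ℕ) : ℚ) by rw [map_natCast], ← map_mul,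
    inv_mul_cancel₀ (Nat.cast_ne_zero.2 hm), map_one]

lemma solve_spec {S : Type} [PartialOrder S] (ν : S → ℕ) (h : IsTPNorm ν)
    {k : Type*} [CommRing k] [Algebra ℚ k] (w : S → k) (s : S) :
    ghost ν (solve ν h w) s = w s := by
  rw [ghost_split ν h, solve_eq ν h, ← mul_assoc, mul_comm ((ν s : k)),
    inv_cast_mul (h.1 s).ne', one_mul, sub_add_cancel]


/-! ### Key divisibility -/

section Univ
variable {S T : Type} [PartialOrder S] [PartialOrder T]
  (νS : S → ℕ) (νT : T → ℕ) (hS : IsTPNorm νS) (hT : IsTPNorm νT)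
  (f : S → T) (hf : ∀ s₁ s₂ : S, s₁ ≤ s₂ → f s₁ ≤ f s₂ ∧ νT (f s₂) / νT (f s₁) = νS s₂ / νS s₁)

/-- The universal target vector. -/
noncomputable def yv (s : S) : MvPolynomial T ℤ := ghost νT (fun t => X t) (f s)

include hS hT hf

lemma key_dvd (s : S) (c : S → MvPolynomial T ℤ)
    (hg : ∀ s', s' ≤ s → s' ≠ s → ghost νS c s' = yv νT f s') :
    ((νS s : ℕ) : MvPolynomial T ℤ) ∣ yv νT f s
      - ∑ t ∈ (dF νS hS s).erase s, (νS t : MvPolynomial T ℤ) * c t ^ (νS s / νS t) := by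
  set n := νS s with hn
  have hn0 : n ≠ 0 := (hS.1 s).ne'
  apply natCast_dvd_of_prime_pow hn0
  intro p hp
  by_cases he0 : n.factorization p = 0
  · rw [he0, pow_zero]; exact one_dvd _
  set e := n.factorization p with he
  have hpn : p ∣ n := Nat.dvd_of_factorization_pos he0
  obtain ⟨s', hs'le, hνs'⟩ := exists_le_norm νS hS hpn
  have hs'pos : 0 < νS s' := hS.1 s'
  have hps' : n = p * νS s' := by rw [hνs', Nat.mul_div_cancel' hpn]
  have hs'lt : νS s' < n := by
    conv_rhs => rw [hps']
    calc νS s' < 2 * νS s' := by omega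
      _ ≤ p * νS s' := Nat.mul_le_mul_right _ hp.two_le
  have hs'ne : s' ≠ s := by rintro rfl; exact lt_irrefl _ hs'lt
  have hfs := hf s' s hs'le
  have hndivs' : n / νS s' = p := by
    conv_lhs => rw [hps']
    exact Nat.mul_div_cancel _ hs'pos
  set N := νT (f s) with hN
  set N' := νT (f s') with hN'
  have hN0 : N ≠ 0 := (hT.1 (f s)).ne'
  have hN'dvd : N' ∣ N := hT.2.1 _ _ hfs.1
  have hNp : N = p * N' := by
    have h2 : N / N' = p := by rw [hfs.2, hndivs']
    rw [← h2, Nat.div_mul_cancel hN'dvd]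
  have hpe_dvd_N : p ^ e ∣ N := by
    obtain ⟨s'', hs''le, hνs''⟩ := exists_le_norm νS hS (Nat.ordProj_dvd n p)
    have hfs'' := hf s'' s hs''le
    have hq : νT (f s) / νT (f s'') = p ^ e := by
      rw [hfs''.2, hνs'', Nat.div_div_self (Nat.ordProj_dvd n p) hn0]
    rw [← hq]
    exact Nat.div_dvd_of_dvd (hT.2.1 _ _ hfs''.1)
  have heN : e ≤ N.factorization p := (hp.pow_dvd_iff_le_factorization hN0).1 hpe_dvd_N
  -- Claim 3
  have claim3 : (p : MvPolynomial T ℤ) ^ e ∣ yv νT f s - expand p (yv νT f s') := by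
    have hexp : expand p (yv νT f s')
        = ∑ u ∈ dF νT hT (f s'), (νT u : MvPolynomial T ℤ) * X u ^ (N / νT u) := by
      rw [yv, ghost_eq νT hT, map_sum]
      refine Finset.sum_congr rfl fun u hu => ?_
      have hud : νT u ∣ N' := hT.2.1 _ _ ((mem_dF νT hT).1 hu)
      rw [map_mul, map_natCast, map_pow, expand_X, ← pow_mul]
      congr 2
      rw [hNp, Nat.mul_div_assoc p hud]
    have hsub : dF νT hT (f s') ⊆ dF νT hT (f s) := fun u hu =>
      (mem_dF νT hT).2 (((mem_dF νT hT).1 hu).trans hfs.1)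
    rw [yv, ghost_eq νT hT, hexp, ← Finset.sum_sdiff hsub, add_sub_cancel_right]
    refine Finset.dvd_sum fun u hu => ?_
    have hule := (mem_dF νT hT).1 (Finset.mem_sdiff.1 hu).1
    have hund : ¬ νT u ∣ N' := fun hc =>
      (Finset.mem_sdiff.1 hu).2 ((mem_dF νT hT).2 (le_of_dvd_le νT hT hule hfs.1 hc))
    have hNdivp : N / p = N' := by rw [hNp, Nat.mul_div_cancel_left _ hp.pos]
    have hdvd2 : p ^ N.factorization p ∣ νT u :=
      ordProj_dvd_of_not_dvd_div hp hN0 (hT.2.1 _ _ hule) (by rw [hNdivp]; exact hund)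
    have hdvd3 : (p : MvPolynomial T ℤ) ^ e ∣ ((νT u : ℕ) : MvPolynomial T ℤ) := by
      have h4 : (p : ℕ) ^ e ∣ νT u := dvd_trans (pow_dvd_pow p heN) hdvd2
      have := (Nat.cast_dvd_cast h4 : ((p ^ e : ℕ) : MvPolynomial T ℤ) ∣ _)
      push_cast at this
      exact this
    exact hdvd3.mul_right _
  have hsubS : dF νS hS s' ⊆ (dF νS hS s).erase s := by
    intro t ht
    have htle := (mem_dF νS hS).1 ht
    refine Finset.mem_erase.2 ⟨?_, (mem_dF νS hS).2 (htle.trans hs'le)⟩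
    rintro rfl
    exact absurd (Nat.le_of_dvd hs'pos (hS.2.1 _ _ htle)) (not_le.2 hs'lt)
  rw [← Finset.sum_sdiff hsubS]
  set A := ∑ t ∈ (dF νS hS s).erase s \ dF νS hS s',
    (νS t : MvPolynomial T ℤ) * c t ^ (n / νS t) with hA
  set B := ∑ t ∈ dF νS hS s', (νS t : MvPolynomial T ℤ) * c t ^ (n / νS t) with hB
  have claimA : (p : MvPolynomial T ℤ) ^ e ∣ A := by
    refine Finset.dvd_sum fun t ht => ?_
    have htle := (mem_dF νS hS).1 (Finset.mem_of_mem_erase (Finset.mem_sdiff.1 ht).1)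
    have htnd : ¬ νS t ∣ νS s' := fun hc =>
      (Finset.mem_sdiff.1 ht).2 ((mem_dF νS hS).2 (le_of_dvd_le νS hS htle hs'le hc))
    have h5 : p ^ e ∣ νS t :=
      ordProj_dvd_of_not_dvd_div hp hn0 (hS.2.1 _ _ htle) (by rw [hνs'] at htnd; exact htnd)
    have h6 : ((p ^ e : ℕ) : MvPolynomial T ℤ) ∣ ((νS t : ℕ) : MvPolynomial T ℤ) :=
      Nat.cast_dvd_cast h5
    push_cast at h6
    exact h6.mul_right _
  have hgs' := hg s' hs'le hs'ne
  have claimB : (p : MvPolynomial T ℤ) ^ e ∣ B - expand p (yv νT f s') := by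
    rw [← hgs', ghost_eq νS hS, map_sum, hB, ← Finset.sum_sub_distrib]
    refine Finset.dvd_sum fun t ht => ?_
    have htle := (mem_dF νS hS).1 ht
    have htdvd : νS t ∣ νS s' := hS.2.1 _ _ htle
    set m := νS s' / νS t with hm
    have hm0 : m ≠ 0 := (Nat.div_pos (Nat.le_of_dvd hs'pos htdvd) (hS.1 t)).ne'
    have hexp2 : n / νS t = p * m := by rw [hps', Nat.mul_div_assoc p htdvd]
    rw [map_mul, map_natCast, map_pow, hexp2, pow_mul, ← mul_sub]
    have h1 : (p : MvPolynomial T ℤ) ^ (m.factorization p + 1) ∣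
        (c t ^ p) ^ m - expand p (c t) ^ m :=
      pow_succ_dvd_pow_sub_pow hp (frob_dvd hp (c t)) hm0
    have h2 : (p : MvPolynomial T ℤ) ^ ((νS t).factorization p) ∣ ((νS t : ℕ) : MvPolynomial T ℤ) := by
      have := (Nat.cast_dvd_cast (Nat.ordProj_dvd (νS t) p) :
        ((p ^ (νS t).factorization p : ℕ) : MvPolynomial T ℤ) ∣ _)
      push_cast at this
      exact this
    have hee : (νS t).factorization p + (m.factorization p + 1) = e := by
      have hms : νS s' = νS t * m := (Nat.mul_div_cancel' htdvd).symm
      have hfacs' : (νS s').factorization p = (νS t).factorization p + m.factorization p := by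
        rw [hms, Nat.factorization_mul (hS.1 t).ne' hm0]; rfl
      have hfacn : e = (νS s').factorization p + 1 := by
        rw [he, hps', Nat.factorization_mul hp.pos.ne' hs'pos.ne', Finsupp.add_apply,
          hp.factorization_self]
        omega
      omega
    calc (p : MvPolynomial T ℤ) ^ e
        = (p : MvPolynomial T ℤ) ^ ((νS t).factorization p) *
          (p : MvPolynomial T ℤ) ^ (m.factorization p + 1) := by rw [← pow_add, hee]
      _ ∣ _ := mul_dvd_mul h2 h1
  have hsplit : yv νT f s - (A + B)
      = (yv νT f s - expand p (yv νT f s')) - A - (B - expand p (yv νT f s')) := by ring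
  rw [hsplit]
  exact dvd_sub (dvd_sub claim3 claimA) claimB


lemma exists_lift : ∀ s : S, ∃ r : MvPolynomial T ℤ,
    MvPolynomial.map (Int.castRingHom ℚ) r
      = solve νS hS (fun u => MvPolynomial.map (Int.castRingHom ℚ) (yv νT f u)) s := by
  set ι : MvPolynomial T ℤ →+* MvPolynomial T ℚ := MvPolynomial.map (Int.castRingHom ℚ) with hι
  have hinj : Function.Injective ι :=
    MvPolynomial.map_injective (Int.castRingHom ℚ) fun a b hab => by simpa using hab
  set w : S → MvPolynomial T ℚ := fun u => ι (yv νT f u) with hw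
  suffices H : ∀ nb, ∀ s : S, νS s < nb → ∃ r, ι r = solve νS hS w s by
    exact fun s => H (νS s + 1) s (Nat.lt_succ_self _)
  intro nb
  induction nb with
  | zero => exact fun s hs => absurd hs (Nat.not_lt_zero _)
  | succ nb IH =>
  intro s hsn
  set c : S → MvPolynomial T ℤ := fun t =>
    if hex : ∃ r, ι r = solve νS hS w t then hex.choose else 0 with hc
  have hcspec : ∀ t, νS t < νS s → ι (c t) = solve νS hS w t := by
    intro t ht
    have hex : ∃ r, ι r = solve νS hS w t := IH t (by omega)
    simp only [hc, dif_pos hex]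
    exact hex.choose_spec
  have hgc : ∀ s', s' ≤ s → s' ≠ s → ghost νS c s' = yv νT f s' := by
    intro s' hle hne
    have hlt : νS s' < νS s := norm_lt νS hS hle hne
    apply hinj
    have h1 : ι (ghost νS c s') = ghost νS (fun t => ι (c t)) s' :=
      (ghost_natural νS hS ι c s').symm
    rw [h1, ghost_congr νS hS (a := fun t => ι (c t)) (b := solve νS hS w)
      (fun t htle => hcspec t (lt_of_le_of_lt (Nat.le_of_dvd (hS.1 s') (hS.2.1 t s' htle)) hlt)),
      solve_spec νS hS w s']
  obtain ⟨r0, hr0⟩ := key_dvd νS νT hS hT f hf s c hgc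
  have hslt : ∀ t ∈ (dF νS hS s).erase s, ι (c t) = solve νS hS w t := fun t ht =>
    hcspec t (norm_lt νS hS ((mem_dF νS hS).1 (Finset.mem_of_mem_erase ht))
      (Finset.ne_of_mem_erase ht))
  refine ⟨r0, ?_⟩
  rw [solve_eq νS hS w s]
  have hsum : ∑ t ∈ (dF νS hS s).erase s,
        (νS t : MvPolynomial T ℚ) * solve νS hS w t ^ (νS s / νS t)
      = ι (∑ t ∈ (dF νS hS s).erase s, (νS t : MvPolynomial T ℤ) * c t ^ (νS s / νS t)) := by
    rw [map_sum]
    exact Finset.sum_congr rfl fun t ht => by rw [map_mul, map_natCast, map_pow, hslt t ht]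
  rw [hsum, show w s = ι (yv νT f s) from rfl, ← map_sub, hr0, map_mul, map_natCast,
    ← mul_assoc, inv_cast_mul (hS.1 s).ne', one_mul]

lemma ghost_surj_univ : ∃ b : S → MvPolynomial T ℤ, ∀ s, ghost νS b s = yv νT f s := by
  have hinj : Function.Injective (MvPolynomial.map (Int.castRingHom ℚ) :
      MvPolynomial T ℤ →+* MvPolynomial T ℚ) :=
    MvPolynomial.map_injective (Int.castRingHom ℚ) fun a b hab => by simpa using hab
  choose b hb using exists_lift νS νT hS hT f hf
  refine ⟨b, fun s => ?_⟩
  apply hinj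
  rw [← ghost_natural νS hS (MvPolynomial.map (Int.castRingHom ℚ)) b s,
    ghost_congr νS hS (a := fun t => MvPolynomial.map (Int.castRingHom ℚ) (b t))
      (b := solve νS hS fun u => MvPolynomial.map (Int.castRingHom ℚ) (yv νT f u))
      (fun t _ => hb t),
    solve_spec]

end Univ
end TPAux

/-- Existence and uniqueness of the restriction/Frobenius map `f*` induced by a map
of truncation posets `f : S → T`: on ghost coordinates it is `⟨x_t⟩ ↦ ⟨x_{f s}⟩`,
it lifts to Witt coordinates, and the lift is unique among maps natural in `k`. -/
theorem stmt5 {S T : Type} [PartialOrder S] [PartialOrder T]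
    (νS : S → ℕ) (νT : T → ℕ) (hS : TP.IsTPNorm νS) (hT : TP.IsTPNorm νT)
    (f : S → T) (hf : TP.IsTPMap νS νT f) :
    (∀ (k : Type) [CommRing k], ∀ a : T → k,
        ∃ b : S → k, TP.ghost νS b = fun s => TP.ghost νT a (f s)) ∧
    ∃! F : ∀ (k : Type) [CommRing k], (T → k) → (S → k),
      (∀ (k : Type) [CommRing k], ∀ a : T → k,
        TP.ghost νS (F k a) = fun s => TP.ghost νT a (f s)) ∧
      (∀ (k₁ k₂ : Type) [CommRing k₁] [CommRing k₂], ∀ (g : k₁ →+* k₂) (a : T → k₁),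
        F k₂ (fun t => g (a t)) = fun s => g (F k₁ a s)) := by
  classical
  obtain ⟨b, hb⟩ := TPAux.ghost_surj_univ νS νT hS hT f hf
  have ghost_prop : ∀ (k : Type) [CommRing k], ∀ a : T → k,
      TP.ghost νS (fun s => MvPolynomial.eval₂Hom (Int.castRingHom k) a (b s))
        = fun s => TP.ghost νT a (f s) := by
    intro k _ a
    funext s
    rw [TPAux.ghost_natural νS hS (MvPolynomial.eval₂Hom (Int.castRingHom k) a) b s, hb s,
      TPAux.yv, ← TPAux.ghost_natural νT hT (MvPolynomial.eval₂Hom (Int.castRingHom k) a)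
        (fun t => MvPolynomial.X t) (f s)]
    simp only [MvPolynomial.eval₂Hom_X']
  constructor
  · intro k _ a
    exact ⟨fun s => MvPolynomial.eval₂Hom (Int.castRingHom k) a (b s), ghost_prop k a⟩
  · refine ⟨fun k _ a s => MvPolynomial.eval₂Hom (Int.castRingHom k) a (b s),
      ⟨ghost_prop, ?_⟩, ?_⟩
    · intro k₁ k₂ _ _ g a
      funext s
      have hcomp := MvPolynomial.comp_eval₂Hom (Int.castRingHom k₁) a g
      have h2 : g.comp (Int.castRingHom k₁) = Int.castRingHom k₂ := Subsingleton.elim _ _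
      rw [h2] at hcomp
      exact (DFunLike.congr_fun hcomp (b s)).symm
    · rintro F' ⟨h1, h2⟩
      have hbF : F' (MvPolynomial T ℤ) (fun t => MvPolynomial.X t) = b := by
        funext u
        refine TPAux.ghost_injective νS hS
          (a := F' (MvPolynomial T ℤ) fun t => MvPolynomial.X t) (b := b) (fun v => ?_) u
        rw [hb v, TPAux.yv]
        exact congrFun (h1 (MvPolynomial T ℤ) fun t => MvPolynomial.X t) v
      funext k inst a s
      have hnat := congrFun (h2 (MvPolynomial T ℤ) k
        (MvPolynomial.eval₂Hom (Int.castRingHom k) a) (fun t => MvPolynomial.X t)) s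
      simp only [MvPolynomial.eval₂Hom_X'] at hnat
      rw [hbF] at hnat
      exact hnat
end

section
/- Decomposition of T-maps: Let f : S → T be a T-map of truncation posets. Decompose S = ⊔_i S_i and T = ⊔_j T_j into connected components, each isomorphic via |−| to an ordinary truncation set. Then f restricts to maps f_i : S_i → T_{j(i)}, and each f_i corresponds, under isomorphisms of S_i with an ordinary truncation set U and T_{j(i)} with an ordinary truncation set V, to the multiplication-by-n map V/n → V, where n is the image of the element of norm 1 and V/n = { t ∈ ℕ : nt ∈ V }. -/
/-- Decomposition of T-maps: a T-map `f : S → T` sends the connected component of a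
norm-1 element `i` to the component of `f i`, multiplying norms by `n = |f i|`,
injectively, with image exactly the elements of that component whose norm is
divisible by `n`; i.e. each restriction is isomorphic to `V/n → V`, multiplication
by `n`. -/
theorem stmt6 {S T : Type*} [PartialOrder S] [PartialOrder T]
    (νS : S → ℕ) (νT : T → ℕ) (hS : TP.IsTPNorm νS) (hT : TP.IsTPNorm νT)
    (f : S → T) (hf : TP.IsTMap νS νT f) :
    ∀ i : S, νS i = 1 → ∀ n : ℕ, n = νT (f i) →
      (∀ s : S, i ≤ s → νT (f s) = n * νS s) ∧
      Set.InjOn f {s : S | i ≤ s} ∧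
      (∀ t : T, TP.SameComp νT t (f i) → ((∃ s : S, i ≤ s ∧ f s = t) ↔ n ∣ νT t)) := by
  intro i hi n hn
  obtain ⟨hSpos, hSdvd, _, hSdiv, hSuniq⟩ := hS
  obtain ⟨hTpos, hTdvd, _, hTdiv, hTuniq⟩ := hT
  obtain ⟨htp, hfib, _⟩ := hf
  have npos : 0 < n := hn ▸ hTpos (f i)
  have key : ∀ s : S, i ≤ s → νT (f s) = n * νS s := by
    intro s hs
    obtain ⟨hle, hrat⟩ := htp i s hs
    have hd : νT (f i) ∣ νT (f s) := hTdvd _ _ hle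
    rw [hi, Nat.div_one] at hrat
    obtain ⟨c, hc⟩ := hd
    rw [hc, hn]
    congr 1
    rw [hc] at hrat
    rw [← hrat, Nat.mul_div_cancel_left _ (hn ▸ npos)]
  refine ⟨key, ?_, ?_⟩
  · intro s hs s' hs' hss
    have h1 := key s hs
    have h2 := key s' hs'
    rw [hss, h2] at h1
    exact (hSuniq i s' s hs' hs (Nat.eq_of_mul_eq_mul_left npos h1)).symm
  · intro t ⟨j, hj1, hjt, hjfi⟩
    constructor
    · rintro ⟨s, hs, rfl⟩
      exact ⟨νS s, key s hs⟩
    · rintro ⟨m, hm⟩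
      have mpos : 0 < m := Nat.pos_of_ne_zero fun h => by
        rw [h, mul_zero] at hm; exact (hTpos t).ne' hm
      -- element of norm n below t
      have hmd : m ∣ νT t := ⟨n, by rw [hm, mul_comm]⟩
      obtain ⟨t₀, ⟨ht₀t, ht₀n⟩, _⟩ := hTdiv t m hmd
      have hnt₀ : νT t₀ = n := by rw [ht₀n, hm, Nat.mul_div_cancel _ mpos]
      -- element of norm 1 below t₀
      obtain ⟨j', ⟨hj't₀, hj'1⟩, _⟩ := hTdiv t₀ (νT t₀) dvd_rfl
      rw [Nat.div_self (hTpos t₀)] at hj'1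
      -- uniqueness of norm-1 element below t
      obtain ⟨j'', ⟨_, _⟩, huniq⟩ := hTdiv t (νT t) dvd_rfl
      have e1 : j = j'' := huniq j ⟨hjt, by rw [hj1, Nat.div_self (hTpos t)]⟩
      have e2 : j' = j'' := huniq j' ⟨hj't₀.trans ht₀t, by rw [hj'1, Nat.div_self (hTpos t)]⟩
      have hjt₀ : j ≤ t₀ := by rw [e1, ← e2]; exact hj't₀
      have : t₀ = f i := hTuniq j t₀ (f i) hjt₀ hjfi (by rw [hnt₀, hn])
      obtain ⟨s', hs', hfs'⟩ := hfib i t (this ▸ ht₀t)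
      exact ⟨s', hs', hfs'⟩
end

section
/- Every N-map is a T-map: if f : S → T is a map of truncation posets such that for every s ∈ S and t' in the same connected component as f(s) there exists s' in the same connected component as s with t' | f(s'), then f is a fibration, i.e., for every s ∈ S and t' ∈ T with f(s) | t' there exists s' ∈ S with s | s' and f(s') = t'. -/
/-- Every N-map is a fibration (hence a T-map up to finiteness): if `f` satisfies the
strong fibration condition of N-maps, then for all `s` and `t'` with `f s ≤ t'` there
is `s'` with `s ≤ s'` and `f s' = t'`. -/
theorem stmt7 {S T : Type*} [PartialOrder S] [PartialOrder T]
    (νS : S → ℕ) (νT : T → ℕ) (hS : TP.IsTPNorm νS) (hT : TP.IsTPNorm νT)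
    (f : S → T) (hf : TP.IsTPMap νS νT f)
    (hstrong : ∀ (s : S) (t' : T), TP.SameComp νT (f s) t' →
      ∃ s' : S, TP.SameComp νS s s' ∧ t' ≤ f s') :
    TP.IsFibration f := by

  obtain ⟨hSpos, hSdvd, hSmul, hSdiv, hSuniq⟩ := hS
  obtain ⟨hTpos, hTdvd, hTmul, hTdiv, hTuniq⟩ := hT
  -- key multiplicative form of the map condition
  have key : ∀ a b : S, a ≤ b → f a ≤ f b ∧ νT (f b) = νT (f a) * (νS b / νS a) := by
    intro a b h
    refine ⟨(hf a b h).1, ?_⟩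
    have hd := hTdvd _ _ (hf a b h).1
    calc νT (f b) = νT (f a) * (νT (f b) / νT (f a)) := (Nat.mul_div_cancel' hd).symm
    _ = νT (f a) * (νS b / νS a) := by rw [(hf a b h).2]
  intro s t' hle
  -- norm-1 element below f s
  obtain ⟨w, ⟨hw1, hw2⟩, -⟩ := hTdiv (f s) (νT (f s)) dvd_rfl
  have hw2' : νT w = 1 := by rw [hw2, Nat.div_self (hTpos (f s))]
  obtain ⟨s', ⟨i, hi1, his, his'⟩, ht'⟩ :=
    hstrong s t' ⟨w, hw2', hw1, hw1.trans hle⟩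
  set c := νT (f i) with hc
  have hcpos : 0 < c := hTpos _
  -- norms
  have hfs : νT (f s) = c * νS s := by
    have := (key i s his).2
    rwa [hi1, Nat.div_one] at this
  have hfs' : νT (f s') = c * νS s' := by
    have := (key i s' his').2
    rwa [hi1, Nat.div_one] at this
  have hfit' : f i ≤ t' := ((key i s his).1).trans hle
  have hct' : c ∣ νT t' := hTdvd _ _ hfit'
  set m := νT t' / c with hm
  have ht'cm : νT t' = c * m := (Nat.mul_div_cancel' hct').symm
  have hmpos : 0 < m := by
    have h0 := hTpos t'; rw [ht'cm] at h0; exact Nat.pos_of_ne_zero (fun h => by simp [h] at h0)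
  -- νS s ∣ m
  have hsm : νS s ∣ m := by
    have h1 : νT (f s) ∣ νT t' := hTdvd _ _ hle
    rw [hfs, ht'cm] at h1
    exact (mul_dvd_mul_iff_left hcpos.ne').mp h1
  -- m ∣ νS s'
  have hms' : m ∣ νS s' := by
    have h1 : νT t' ∣ νT (f s') := hTdvd _ _ ht'
    rw [hfs', ht'cm] at h1
    exact (mul_dvd_mul_iff_left hcpos.ne').mp h1
  -- the element s'' below s' of norm m
  obtain ⟨s'', ⟨hs''1, hs''2⟩, -⟩ := hSdiv s' (νS s' / m) (Nat.div_dvd_of_dvd hms')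
  have hs''m : νS s'' = m := by
    rw [hs''2, Nat.div_div_self hms' (hSpos s').ne']
  -- the norm-1 element below s'' equals i
  have huniq1 : ∀ x : S, x ≤ s' → ∀ j : S, j ≤ x → νS j = 1 → j = i := by
    intro x hx j hj hj1
    obtain ⟨z, hz, hzuniq⟩ := hSdiv s' (νS s') dvd_rfl
    have h1 : νS s' / νS s' = 1 := Nat.div_self (hSpos s')
    have hjz := hzuniq j ⟨hj.trans hx, by rw [hj1, h1]⟩
    have hiz := hzuniq i ⟨his', by rw [hi1, h1]⟩
    exact hjz.trans hiz.symm
  -- i ≤ s''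
  have his'' : i ≤ s'' := by
    obtain ⟨j, ⟨hj1, hj2⟩, -⟩ := hSdiv s'' (νS s'') dvd_rfl
    have hj1' : νS j = 1 := by rw [hj2, Nat.div_self (hSpos s'')]
    have := huniq1 s'' hs''1 j hj1 hj1'
    exact this ▸ hj1
  -- f s'' = t'
  have hfs'' : νT (f s'') = νT t' := by
    have := (key i s'' his'').2
    rw [hi1, Nat.div_one, hs''m, ← hc, ← ht'cm] at this
    exact this
  have hfst : f s'' = t' := hTuniq (f i) (f s'') t' (key i s'' his'').1 hfit' hfs''
  -- s ≤ s''
  have hss'' : νS s ∣ νS s'' := hs''m ▸ hsm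
  obtain ⟨u, ⟨hu1, hu2⟩, -⟩ := hSdiv s'' (νS s'' / νS s) (Nat.div_dvd_of_dvd hss'')
  have hu2' : νS u = νS s := by
    rw [hu2, Nat.div_div_self hss'' (hSpos s'').ne']
  obtain ⟨j', ⟨hj'1, hj'2⟩, -⟩ := hSdiv u (νS u) dvd_rfl
  have hj'1' : νS j' = 1 := by rw [hj'2, Nat.div_self (hSpos u)]
  have hji : j' = i := huniq1 u (hu1.trans hs''1) j' hj'1 hj'1'
  have hiu : i ≤ u := hji ▸ hj'1
  have hus : u = s := hSuniq i u s hiu his hu2'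
  exact ⟨s'', hus ▸ hu1, hfst⟩
end

section
/- Compatibility of generalized preimages with composition: Let f : S → T and g : T → U be N-maps of truncation posets. For a subset (or element) u of U, define ĝ⁻¹(u) as the set of minimal elements t ∈ T with u | g(t), and similarly for f. Then for every u ∈ U, the set of minimal elements s ∈ S with u | (g∘f)(s) equals the union over t ∈ ĝ⁻¹(u) of the minimal elements s with t | f(s); that is, (g∘f)^{-hat}(u) = f^{-hat}(ĝ⁻¹(u)). -/
section Aux
open TP

variable {S : Type*} [PartialOrder S] {ν : S → ℕ}

theorem aux_exists_unique_below (h : IsTPNorm ν) (s : S) {m : ℕ} (hm : m ∣ ν s) :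
    ∃! t : S, t ≤ s ∧ ν t = m := by
  have hs : ν s ≠ 0 := (h.1 s).ne'
  have hd : ν s / m ∣ ν s := Nat.div_dvd_of_dvd hm
  obtain ⟨t, ⟨ht1, ht2⟩, huniq⟩ := h.2.2.2.1 s (ν s / m) hd
  have hm' : ν s / (ν s / m) = m := Nat.div_div_self hm hs
  refine ⟨t, ⟨ht1, by rw [ht2, hm']⟩, ?_⟩
  intro y hy
  exact huniq y ⟨hy.1, by rw [hy.2, hm']⟩

theorem aux_le_of_dvd (h : IsTPNorm ν) {s t₁ t₂ : S} (h1 : t₁ ≤ s) (h2 : t₂ ≤ s)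
    (hd : ν t₁ ∣ ν t₂) : t₁ ≤ t₂ := by
  obtain ⟨r, ⟨hr1, hr2⟩, _⟩ := aux_exists_unique_below h t₂ hd
  have huniq := aux_exists_unique_below h s (m := ν t₁) (h.2.1 _ _ h1)
  have : r = t₁ := huniq.unique ⟨le_trans hr1 h2, hr2⟩ ⟨h1, rfl⟩
  exact this ▸ hr1

theorem aux_eq_of_norm_eq (h : IsTPNorm ν) {s t₁ t₂ : S} (h1 : t₁ ≤ s) (h2 : t₂ ≤ s)
    (he : ν t₁ = ν t₂) : t₁ = t₂ :=
  le_antisymm (aux_le_of_dvd h h1 h2 (he ▸ dvd_rfl))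
    (aux_le_of_dvd h h2 h1 (he ▸ dvd_rfl))

theorem aux_finite_below (h : IsTPNorm ν) (s : S) : {t : S | t ≤ s}.Finite := by
  apply Set.Finite.of_finite_image (f := ν)
  · apply (Set.finite_Icc 1 (ν s)).subset
    rintro x ⟨t, ht, rfl⟩
    exact ⟨h.1 t, Nat.le_of_dvd (h.1 s) (h.2.1 _ _ ht)⟩
  · intro a ha b hb hab
    exact aux_eq_of_norm_eq h ha hb hab

theorem aux_exists_hatPreim_le {T U : Type*} [PartialOrder T] [PartialOrder U]
    {νT : T → ℕ} (hT : IsTPNorm νT) (g : T → U) {u : U} {t₀ : T} (h0 : u ≤ g t₀) :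
    ∃ t, t ≤ t₀ ∧ t ∈ hatPreim g u := by
  have hfin : ({t' : T | t' ≤ t₀ ∧ u ≤ g t'}).Finite :=
    (aux_finite_below hT t₀).subset (fun x hx => hx.1)
  have hne : ({t' : T | t' ≤ t₀ ∧ u ≤ g t'}).Nonempty := ⟨t₀, le_refl _, h0⟩
  obtain ⟨t, htA, hmin⟩ := Set.exists_min_image _ νT hfin hne
  refine ⟨t, htA.1, htA.2, ?_⟩
  intro t' ht' hu'
  have hA' : t' ∈ {t' : T | t' ≤ t₀ ∧ u ≤ g t'} := ⟨le_trans ht' htA.1, hu'⟩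
  have h1 : νT t ≤ νT t' := hmin t' hA'
  have h2 : νT t' ∣ νT t := hT.2.1 _ _ ht'
  exact aux_eq_of_norm_eq hT ht' (le_refl t)
    (le_antisymm (Nat.le_of_dvd (hT.1 t) h2) h1)

theorem aux_norm_of_min {T U : Type*} [PartialOrder T] [PartialOrder U]
    {νT : T → ℕ} {νU : U → ℕ} (hT : IsTPNorm νT) (hU : IsTPNorm νU)
    {g : T → U} (hg : IsTPMap νT νU g) {u : U} {t : T} (ht : t ∈ hatPreim g u)
    {i : T} (hi : i ≤ t) (hi1 : νT i = 1) :
    νT t = νU u / Nat.gcd (νU u) (νU (g i)) := by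
  obtain ⟨hut, hmin⟩ := ht
  set u₀ := νU u with hu₀def
  set b := νU (g i) with hbdef
  set g₀ := Nat.gcd u₀ b with hg₀def
  set e₀ := u₀ / g₀ with he₀def
  obtain ⟨hgi_le, hgi_q⟩ := hg i t hi
  have hbdvd : b ∣ νU (g t) := hU.2.1 _ _ hgi_le
  have hq : νU (g t) / b = νT t := by rw [hgi_q, hi1, Nat.div_one]
  have hgt : νU (g t) = b * νT t := by rw [← hq, Nat.mul_div_cancel' hbdvd]
  have hu0 : u₀ ∣ b * νT t := hgt ▸ hU.2.1 _ _ hut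
  have hu0pos : 0 < u₀ := hU.1 u
  have hg0pos : 0 < g₀ := Nat.gcd_pos_of_pos_left _ hu0pos
  have h1 : g₀ * e₀ ∣ g₀ * ((b / g₀) * νT t) := by
    rw [Nat.mul_div_cancel' (Nat.gcd_dvd_left u₀ b), ← mul_assoc,
      Nat.mul_div_cancel' (Nat.gcd_dvd_right u₀ b)]
    exact hu0
  have h2 : e₀ ∣ (b / g₀) * νT t := (Nat.mul_dvd_mul_iff_left hg0pos).mp h1
  have hcop : Nat.Coprime e₀ (b / g₀) := Nat.coprime_div_gcd_div_gcd hg0pos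
  have he0n : e₀ ∣ νT t := hcop.dvd_of_dvd_mul_left h2
  have he0pos : 0 < e₀ :=
    Nat.div_pos (Nat.le_of_dvd hu0pos (Nat.gcd_dvd_left _ _)) hg0pos
  obtain ⟨t'', ⟨ht''le, ht''ν⟩, _⟩ := aux_exists_unique_below hT t he0n
  obtain ⟨hgt''le, hgt''q⟩ := hg t'' t ht''le
  have hdvd'' : νU (g t'') ∣ νU (g t) := hU.2.1 _ _ hgt''le
  have hqq : νU (g t) / νU (g t'') = νT t / e₀ := by rw [hgt''q, ht''ν]
  have hne : 0 < νT t / e₀ := Nat.div_pos (Nat.le_of_dvd (hT.1 t) he0n) he0pos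
  have hkey : νU (g t'') * (νT t / e₀) = (b * e₀) * (νT t / e₀) := by
    have h3 : νU (g t'') * (νT t / e₀) = νU (g t) := by
      rw [← hqq, Nat.mul_div_cancel' hdvd'']
    have h4 : (b * e₀) * (νT t / e₀) = b * νT t := by
      rw [mul_assoc, Nat.mul_div_cancel' he0n]
    rw [h3, h4, hgt]
  have hgt'' : νU (g t'') = b * e₀ := Nat.eq_of_mul_eq_mul_right hne hkey
  have hbe : b * e₀ = u₀ * (b / g₀) := by
    calc b * e₀ = b * u₀ / g₀ := (Nat.mul_div_assoc b (Nat.gcd_dvd_left u₀ b)).symm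
      _ = u₀ * b / g₀ := by rw [mul_comm b u₀]
      _ = u₀ * (b / g₀) := Nat.mul_div_assoc u₀ (Nat.gcd_dvd_right u₀ b)
  have hu0dvd'' : u₀ ∣ νU (g t'') := by
    rw [hgt'', hbe]; exact dvd_mul_right u₀ _
  have hut'' : u ≤ g t'' := aux_le_of_dvd hU hut hgt''le hu0dvd''
  have ht''t : t'' = t := hmin t'' ht''le hut''
  rw [← ht''t]
  exact ht''ν

end Aux

/-- Compatibility of the generalized preimage with composition: for N-maps
`f : S → T` and `g : T → U`, the minimal elements over `u` for `g ∘ f` are exactly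
the minimal elements for `f` over the minimal elements for `g` over `u`. -/
theorem stmt8 {S T U : Type*} [PartialOrder S] [PartialOrder T] [PartialOrder U]
    (νS : S → ℕ) (νT : T → ℕ) (νU : U → ℕ)
    (hS : TP.IsTPNorm νS) (hT : TP.IsTPNorm νT) (hU : TP.IsTPNorm νU)
    (f : S → T) (g : T → U) (hf : TP.IsNMap νS νT f) (hg : TP.IsNMap νT νU g) :
    ∀ u : U, TP.hatPreim (g ∘ f) u = ⋃ t ∈ TP.hatPreim g u, TP.hatPreim f t :=  by
  intro u
  ext s
  simp only [TP.hatPreim, Set.mem_iUnion, Set.mem_setOf_eq, Function.comp_apply]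
  constructor
  · rintro ⟨hus, hmins⟩
    obtain ⟨t, htfs, htmem⟩ := aux_exists_hatPreim_le hT g hus
    refine ⟨t, htmem, htfs, ?_⟩
    intro s' hs' hts'
    exact hmins s' hs' (le_trans htmem.1 ((hg.1 _ _ hts').1))
  · rintro ⟨t, ⟨hut, htmin⟩, htfs, hsmin⟩
    refine ⟨le_trans hut ((hg.1 _ _ htfs).1), ?_⟩
    intro s' hs' hus'
    obtain ⟨t', ht'le, ht'mem⟩ := aux_exists_hatPreim_le hT g hus'
    obtain ⟨i, ⟨hile, hi1⟩, _⟩ := aux_exists_unique_below hT (f s) (one_dvd _)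
    have hfs' : f s' ≤ f s := (hf.1 _ _ hs').1
    have hit : i ≤ t := aux_le_of_dvd hT hile htfs (by rw [hi1]; exact one_dvd _)
    have ht'fs : t' ≤ f s := le_trans ht'le hfs'
    have hit' : i ≤ t' := aux_le_of_dvd hT hile ht'fs (by rw [hi1]; exact one_dvd _)
    have hν : νT t = νT t' := by
      rw [aux_norm_of_min hT hU hg.1 ⟨hut, htmin⟩ hit hi1,
        aux_norm_of_min hT hU hg.1 ht'mem hit' hi1]
    have htt' : t = t' := aux_eq_of_norm_eq hT htfs ht'fs hν
    exact hsmin s' hs' (by rw [htt']; exact ht'le)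
end

section
/- Divisibility structure of generalized preimages: Let f : S → T be an N-map of truncation posets. Given t, t' ∈ T with t | t' and s ∈ f^{-hat}(t) (i.e., s is minimal with t | f(s)), there is a unique s' ∈ f^{-hat}(t') with s | s'. Conversely, given s' ∈ f^{-hat}(t') there is a unique s ∈ f^{-hat}(t) with s | s'. -/
open TP

section Aux

variable {S : Type*} [PartialOrder S] {nu : S → ℕ}

/-- Below a fixed element, norm divisibility implies order. -/
lemma aux_le_of_dvd_s9 (hS : IsTPNorm nu) {x y z : S} (hxz : x ≤ z) (hyz : y ≤ z)
    (h : nu x ∣ nu y) : x ≤ y := by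
  obtain ⟨hpos, hdvd, -, hex, -⟩ := hS
  obtain ⟨w, ⟨hwy, hwn⟩, -⟩ := hex y (nu y / nu x) (Nat.div_dvd_of_dvd h)
  have hwx : nu w = nu x := by rw [hwn, Nat.div_div_self h (hpos y).ne']
  have hxdz : nu x ∣ nu z := hdvd x z hxz
  obtain ⟨w', -, huniq⟩ := hex z (nu z / nu x) (Nat.div_dvd_of_dvd hxdz)
  have hzz : nu z / (nu z / nu x) = nu x := Nat.div_div_self hxdz (hpos z).ne'
  have h1 : w = w' := huniq w ⟨hwy.trans hyz, by rw [hwx, hzz]⟩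
  have h2 : x = w' := huniq x ⟨hxz, hzz.symm⟩
  have : x = w := h2.trans h1.symm
  rw [this]; exact hwy

/-- Below a fixed element, elements with equal norms coincide. -/
lemma aux_eq (hS : IsTPNorm nu) {x y z : S} (hxz : x ≤ z) (hyz : y ≤ z)
    (h : nu x = nu y) : x = y :=
  le_antisymm (aux_le_of_dvd_s9 hS hxz hyz h.dvd) (aux_le_of_dvd_s9 hS hyz hxz h.symm.dvd)

/-- Every element has a norm-1 element below it. -/
lemma aux_unit (hS : IsTPNorm nu) (s : S) : ∃ i, i ≤ s ∧ nu i = 1 := by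
  obtain ⟨i, ⟨his, hin⟩, -⟩ := hS.2.2.2.1 s (nu s) dvd_rfl
  exact ⟨i, his, by rw [hin, Nat.div_self (hS.1 s)]⟩

end Aux

section Maps

variable {S T : Type*} [PartialOrder S] [PartialOrder T]
  {νS : S → ℕ} {νT : T → ℕ} {f : S → T}

/-- Norm bookkeeping for a TP-map applied to `u ≤ x`. -/
lemma aux_ratio (hS : IsTPNorm νS) (hT : IsTPNorm νT) (hf1 : IsTPMap νS νT f)
    {u x : S} (hux : u ≤ x) :
    f u ≤ f x ∧ (νS x / νS u) ∣ νT (f x) ∧ νT (f u) = νT (f x) / (νS x / νS u) := by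
  obtain ⟨hfle, hrat⟩ := hf1 u x hux
  have hdT : νT (f u) ∣ νT (f x) := hT.2.1 _ _ hfle
  have hn : νT (f x) = νT (f u) * (νS x / νS u) := by
    rw [← hrat, Nat.mul_div_cancel' hdT]
  have hpos : 0 < νT (f u) := hT.1 _
  refine ⟨hfle, ⟨νT (f u), by rw [hn, mul_comm]⟩, ?_⟩
  have hq : 0 < νS x / νS u := by
    rcases Nat.eq_zero_or_pos (νS x / νS u) with h | h
    · rw [h, mul_zero] at hn; exact absurd hn (hT.1 (f x)).ne'
    · exact h
  rw [hn, Nat.mul_div_cancel _ hq]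

/-- Core construction: the minimal element below `x` whose image is above `t`. -/
lemma lemA0 (hS : IsTPNorm νS) (hT : IsTPNorm νT) (hf1 : IsTPMap νS νT f)
    {t : T} {x : S} (htx : t ≤ f x) :
    ∃ u, u ≤ x ∧ νS u = νS x / Nat.gcd (νS x) (νT (f x) / νT t) ∧ t ≤ f u ∧
      ∀ v, v ≤ x → t ≤ f v → u ≤ v := by
  set τ := νT t with hτdef
  set n := νT (f x) with hndef
  set a := νS x with hadef
  set g := Nat.gcd a (n / τ) with hgdef
  have hτn : τ ∣ n := hT.2.1 t (f x) htx
  have hga : g ∣ a := Nat.gcd_dvd_left _ _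
  have hgnτ : g ∣ n / τ := Nat.gcd_dvd_right _ _
  have hgn : g ∣ n := hgnτ.trans (Nat.div_dvd_of_dvd hτn)
  obtain ⟨u, ⟨hux, hun⟩, -⟩ := hS.2.2.2.1 x g hga
  have haug : a / νS u = g := by
    rw [hun, Nat.div_div_self hga (hS.1 x).ne']
  obtain ⟨hfle, hdn, hfu⟩ := aux_ratio hS hT hf1 hux
  have hfug : νT (f u) = n / g := by rw [hfu, haug]
  have htfu : t ≤ f u := by
    have h1 : τ * g ∣ n := (Nat.dvd_div_iff_mul_dvd hτn).mp hgnτ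
    have h2 : τ ∣ n / g := (Nat.dvd_div_iff_mul_dvd hgn).mpr (by rwa [mul_comm g τ])
    exact aux_le_of_dvd_s9 hT htx hfle (by rw [hfug]; exact h2)
  refine ⟨u, hux, by rw [hun], htfu, ?_⟩
  intro v hvx htv
  obtain ⟨hflev, hdnv, hfv⟩ := aux_ratio hS hT hf1 hvx
  set e := a / νS v with hedef
  have hev : νS v ∣ a := hS.2.1 v x hvx
  have hea : e ∣ a := Nat.div_dvd_of_dvd hev
  have hτfv : τ ∣ n / e := by
    have := hT.2.1 t (f v) htv
    rwa [hfv] at this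
  have h3 : e * τ ∣ n := (Nat.dvd_div_iff_mul_dvd hdnv).mp hτfv
  have h4 : e ∣ n / τ := (Nat.dvd_div_iff_mul_dvd hτn).mpr (by rwa [mul_comm τ e])
  have heg : e ∣ g := Nat.dvd_gcd hea h4
  -- a / g ∣ a / e
  obtain ⟨k, hk⟩ := heg
  have hepos : 0 < e := Nat.pos_of_dvd_of_pos hea (hS.1 x)
  have h5 : a = a / g * k * e := by
    calc a = a / g * g := (Nat.div_mul_cancel hga).symm
    _ = a / g * k * e := by rw [hk]; ring
  have hae : a / e = a / g * k := Nat.div_eq_of_eq_mul_left hepos h5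
  have hdvdnorm : νS u ∣ νS v := by
    have : νS v = a / e := by
      rw [hedef, Nat.div_div_self hev (hS.1 x).ne']
    rw [this, hun, hae]
    exact ⟨k, rfl⟩
  exact aux_le_of_dvd_s9 hS hux hvx hdvdnorm

/-- Existence and uniqueness of a `hatPreim`-element below any `x` with `t ≤ f x`. -/
lemma lemA (hS : IsTPNorm νS) (hT : IsTPNorm νT) (hf1 : IsTPMap νS νT f)
    {t : T} {x : S} (htx : t ≤ f x) :
    ∃ s, (s ∈ hatPreim f t ∧ s ≤ x) ∧
      ∀ s₀, s₀ ∈ hatPreim f t → s₀ ≤ x → s₀ = s := by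
  obtain ⟨u, hux, -, htfu, hmin⟩ := lemA0 hS hT hf1 htx
  have hmem : u ∈ hatPreim f t :=
    ⟨htfu, fun v hvu htv => le_antisymm hvu (hmin v (hvu.trans hux) htv)⟩
  exact ⟨u, ⟨hmem, hux⟩, fun s₀ hs₀ hs₀x =>
    (hs₀.2 u (hmin s₀ hs₀x hs₀.1) htfu).symm⟩

/-- A minimal preimage element has coprime "leftover" norm data. -/
lemma aux_coprime (hS : IsTPNorm νS) (hT : IsTPNorm νT) (hf1 : IsTPMap νS νT f)
    {t : T} {s : S} (hs : s ∈ hatPreim f t) :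
    Nat.gcd (νS s) (νT (f s) / νT t) = 1 := by
  obtain ⟨u, hus, hun, htfu, -⟩ := lemA0 hS hT hf1 hs.1
  have hueq : u = s := hs.2 u hus htfu
  set g := Nat.gcd (νS s) (νT (f s) / νT t) with hgdef
  have hga : g ∣ νS s := Nat.gcd_dvd_left _ _
  have h1 : νS s = νS s / g := by rw [← hueq] at *; exact hun
  have h2 : νS s * g = νS s := by
    conv_lhs => rw [h1]
    exact Nat.div_mul_cancel hga
  have := Nat.eq_of_mul_eq_mul_left (hS.1 s) (by rw [h2, mul_one] : νS s * g = νS s * 1)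
  exact this

/-- Arithmetic core: the norm of a minimal preimage element in a component is determined. -/
lemma aux_numth {a c τ : ℕ} (ha : 0 < a) (hτ : 0 < τ)
    (hdvd : τ ∣ c * a) (hcop : Nat.gcd a (c * a / τ) = 1) :
    a = τ / Nat.gcd τ c := by
  set d := Nat.gcd τ c with hddef
  have hdpos : 0 < d := Nat.gcd_pos_of_pos_left c hτ
  have hdτ : d ∣ τ := Nat.gcd_dvd_left _ _
  have hdc : d ∣ c := Nat.gcd_dvd_right _ _
  obtain ⟨k, hk⟩ := hdvd
  have h1 : τ / d ∣ c / d * a := by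
    refine ⟨k, ?_⟩
    have hmul : d * (c / d * a) = d * (τ / d * k) := by
      rw [← mul_assoc, ← mul_assoc, Nat.mul_div_cancel' hdc, Nat.mul_div_cancel' hdτ, hk]
    exact Nat.eq_of_mul_eq_mul_left hdpos hmul
  have hco : Nat.Coprime (τ / d) (c / d) := Nat.coprime_div_gcd_div_gcd hdpos
  have h2 : τ / d ∣ a := hco.dvd_of_dvd_mul_left h1
  obtain ⟨m, hm⟩ := h2
  have h3 : c * a / τ = c / d * m := by
    have h4 : c * a = τ * (c / d * m) := by
      calc c * a = c * (τ / d * m) := by rw [hm]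
      _ = c / d * d * (τ / d * m) := by rw [Nat.div_mul_cancel hdc]
      _ = τ / d * d * (c / d * m) := by ring
      _ = τ * (c / d * m) := by rw [Nat.div_mul_cancel hdτ]
    rw [h4, Nat.mul_div_cancel_left _ hτ]
  have hm1 : m = 1 := by
    have hma : m ∣ a := Dvd.intro_left _ hm.symm
    have hmc : m ∣ c * a / τ := by rw [h3]; exact Dvd.intro_left _ rfl
    have : m ∣ 1 := hcop ▸ Nat.dvd_gcd hma hmc
    exact Nat.eq_one_of_dvd_one this  -- fix name if needed
  rw [hm, hm1, mul_one]

/-- At most one `hatPreim` element per connected component. -/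
lemma lemB (hS : IsTPNorm νS) (hT : IsTPNorm νT) (hf1 : IsTPMap νS νT f)
    {t : T} {i s s₀ : S} (hi : νS i = 1) (his : i ≤ s) (his₀ : i ≤ s₀)
    (hs : s ∈ hatPreim f t) (hs₀ : s₀ ∈ hatPreim f t) : s = s₀ := by
  have key : ∀ y : S, i ≤ y → y ∈ hatPreim f t →
      νS y = νT t / Nat.gcd (νT t) (νT (f i)) := by
    intro y hiy hy
    obtain ⟨hfle, hdn, hfi⟩ := aux_ratio hS hT hf1 hiy
    have hdiv : νS y / νS i = νS y := by rw [hi, Nat.div_one]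
    have hfy : νT (f y) = νT (f i) * νS y := by
      have hd : νT (f i) ∣ νT (f y) := hT.2.1 _ _ hfle
      have : νT (f i) = νT (f y) / νS y := by rw [hfi, hdiv]
      rw [this, Nat.div_mul_cancel]
      rwa [hdiv] at hdn
    have hcop := aux_coprime hS hT hf1 hy
    rw [hfy] at hcop
    have hτdvd : νT t ∣ νT (f i) * νS y := by
      have := hT.2.1 t (f y) hy.1
      rwa [hfy] at this
    exact aux_numth (hS.1 y) (hT.1 t) hτdvd hcop
  exact hS.2.2.2.2 i s s₀ his his₀ ((key s his hs).trans (key s₀ his₀ hs₀).symm)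

end Maps


/-- Divisibility structure of generalized preimages: for an N-map `f : S → T` and
`t ≤ t'`, every `s ∈ f^{-hat}(t)` divides a unique `s' ∈ f^{-hat}(t')`, and every
`s' ∈ f^{-hat}(t')` is divisible by a unique `s ∈ f^{-hat}(t)`. -/
theorem stmt9 {S T : Type*} [PartialOrder S] [PartialOrder T]
    (νS : S → ℕ) (νT : T → ℕ) (hS : TP.IsTPNorm νS) (hT : TP.IsTPNorm νT)
    (f : S → T) (hf : TP.IsNMap νS νT f) :
    ∀ t t' : T, t ≤ t' →
      (∀ s ∈ TP.hatPreim f t, ∃! s' : S, s' ∈ TP.hatPreim f t' ∧ s ≤ s') ∧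
      (∀ s' ∈ TP.hatPreim f t', ∃! s : S, s ∈ TP.hatPreim f t ∧ s ≤ s') := by

  intro t t' htt'
  constructor
  · -- Part 1: s ∈ hatPreim f t has a unique s' ∈ hatPreim f t' above it
    intro s hs
    obtain ⟨i, hit, hi1⟩ := aux_unit hT t
    have hsc : TP.SameComp νT (f s) t' := ⟨i, hi1, hit.trans hs.1, hit.trans htt'⟩
    obtain ⟨s₁, ⟨j, hj1, hjs, hjs₁⟩, hts₁⟩ := hf.2.1 s t' hsc
    obtain ⟨s'', ⟨hs''mem, hs''s₁⟩, -⟩ := lemA hS hT hf.1 hts₁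
    have hts'' : t ≤ f s'' := htt'.trans hs''mem.1
    obtain ⟨s₀, ⟨hs₀mem, hs₀s''⟩, -⟩ := lemA hS hT hf.1 hts''
    obtain ⟨j₀, hj₀s₀, hj₀1⟩ := aux_unit hS s₀
    have hj₀s₁ : j₀ ≤ s₁ := hj₀s₀.trans (hs₀s''.trans hs''s₁)
    have hjj₀ : j = j₀ := aux_eq hS hjs₁ hj₀s₁ (hj1.trans hj₀1.symm)
    have hjs₀ : j ≤ s₀ := by rw [hjj₀]; exact hj₀s₀
    have hss₀ : s = s₀ := lemB hS hT hf.1 hj1 hjs hjs₀ hs hs₀mem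
    have hss'' : s ≤ s'' := by rw [hss₀]; exact hs₀s''
    refine ⟨s'', ⟨hs''mem, hss''⟩, ?_⟩
    rintro y ⟨hymem, hsy⟩
    obtain ⟨k, hks, hk1⟩ := aux_unit hS s
    exact lemB hS hT hf.1 hk1 (hks.trans hsy) (hks.trans hss'') hymem hs''mem
  · -- Part 2: s' ∈ hatPreim f t' has a unique s ∈ hatPreim f t below it
    intro s' hs'
    have hts' : t ≤ f s' := htt'.trans hs'.1
    obtain ⟨s, ⟨hsmem, hss'⟩, huniq⟩ := lemA hS hT hf.1 hts'
    exact ⟨s, ⟨hsmem, hss'⟩, fun y ⟨hy1, hy2⟩ => huniq y hy1 hy2⟩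
end

section
/- Decomposition of N-maps: Let f : S → T be an N-map of truncation posets. Decompose S = ⊔_i S_i and T = ⊔_j T_j into connected components, each isomorphic via |−| to an ordinary truncation set. Then f restricts to maps f_i : S_i → T_{j(i)}, each isomorphic to a map of the form U → ⟨n⟩U given by multiplication by n, where ⟨n⟩U = { t ∈ ℕ : t = e·u for some e | n and u ∈ U }. Moreover, only finitely many components S_i map to each T_j. -/
section Aux
variable {S : Type*} [PartialOrder S] {ν : S → ℕ}

lemma min_unique (h : TP.IsTPNorm ν) {a b c : S} (hac : a ≤ c) (hbc : b ≤ c)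
    (ha : ν a = 1) (hb : ν b = 1) : a = b := by
  obtain ⟨t, _, huniq⟩ := h.2.2.2.1 c (ν c) dvd_rfl
  have hcc : ν c / ν c = 1 := Nat.div_self (h.1 c)
  have h1 := huniq a ⟨hac, by rw [hcc]; exact ha⟩
  have h2 := huniq b ⟨hbc, by rw [hcc]; exact hb⟩
  rw [h1, h2]

lemma exists_min (h : TP.IsTPNorm ν) (s : S) : ∃ j, ν j = 1 ∧ j ≤ s := by
  obtain ⟨j, ⟨hjs, hj⟩, _⟩ := h.2.2.2.1 s (ν s) dvd_rfl
  exact ⟨j, by rw [hj, Nat.div_self (h.1 s)], hjs⟩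

lemma below_trans (h : TP.IsTPNorm ν) {i s s' : S} (hi : ν i = 1) (his' : i ≤ s')
    (hss' : s ≤ s') : i ≤ s := by
  obtain ⟨j, hj1, hjs⟩ := exists_min h s
  have : j = i := min_unique h (hjs.trans hss') his' hj1 hi
  exact this ▸ hjs

end Aux


/-- Decomposition of N-maps: an N-map multiplies norms on each connected component by
`n = |f i|`, is injective on components, the target component's norms are exactly the
products `e·u` with `e ∣ n` and `u` a norm in the source component (i.e. each
restriction is isomorphic to `U → ⟨n⟩U`, multiplication by `n`), and only finitely
many source components map to each target component. -/
theorem stmt10 {S T : Type*} [PartialOrder S] [PartialOrder T]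
    (νS : S → ℕ) (νT : T → ℕ) (hS : TP.IsTPNorm νS) (hT : TP.IsTPNorm νT)
    (f : S → T) (hf : TP.IsNMap νS νT f) :
    (∀ i : S, νS i = 1 → ∀ n : ℕ, n = νT (f i) →
      (∀ s : S, i ≤ s → νT (f s) = n * νS s) ∧
      Set.InjOn f {s : S | i ≤ s} ∧
      (∀ t : T, TP.SameComp νT t (f i) →
        ∃ e u : ℕ, e ∣ n ∧ (∃ s : S, i ≤ s ∧ νS s = u) ∧ νT t = e * u) ∧
      (∀ e u : ℕ, e ∣ n → (∃ s : S, i ≤ s ∧ νS s = u) →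
        ∃ t : T, TP.SameComp νT t (f i) ∧ νT t = e * u)) ∧
    (∀ j : T, νT j = 1 → {i : S | νS i = 1 ∧ j ≤ f i}.Finite) := by
  obtain ⟨hfTP, hfN, hfFin⟩ := hf
  constructor
  · intro i hi n hn
    have hn0 : 0 < n := hn ▸ hT.1 (f i)
    have key : ∀ s : S, i ≤ s → νT (f s) = n * νS s := by
      intro s hs
      obtain ⟨hle, hratio⟩ := hfTP i s hs
      have hd := hT.2.1 _ _ hle
      rw [hi, Nat.div_one] at hratio
      rw [hn, ← hratio]
      exact (Nat.mul_div_cancel' hd).symm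
    refine ⟨key, ?_, ?_, ?_⟩
    · intro s hs s' hs' heq
      have h1 := key s hs
      have h2 := key s' hs'
      have heqν : n * νS s = n * νS s' := by
        rw [← h1, ← h2, heq]
      exact hS.2.2.2.2 i s s' hs hs' (Nat.eq_of_mul_eq_mul_left hn0 heqν)
    · intro t hsame
      obtain ⟨w, hw1, hwt, hwfi⟩ := hsame
      obtain ⟨s', ⟨j, hj1, hji, hjs'⟩, hts'⟩ := hfN i t ⟨w, hw1, hwfi, hwt⟩
      have hji' : j = i := min_unique hS hji le_rfl hj1 hi
      have his' : i ≤ s' := hji' ▸ hjs'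
      set m := νT t with hm
      set v := νS s' with hv
      set g := Nat.gcd m v with hg
      have hm0 : 0 < m := hT.1 t
      have hv0 : 0 < v := hS.1 s'
      have hg0 : 0 < g := Nat.gcd_pos_of_pos_left _ hm0
      have hmd : m ∣ n * v := by
        have := hT.2.1 _ _ hts'
        rwa [key s' his'] at this
      have hcop : Nat.Coprime (m / g) (v / g) := Nat.coprime_div_gcd_div_gcd hg0
      have hstep : g * (m / g) ∣ g * (n * (v / g)) := by
        rw [Nat.mul_div_cancel' (Nat.gcd_dvd_left m v)]
        calc m ∣ n * v := hmd
          _ = g * (n * (v / g)) := by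
            rw [show n * (v / g) = v / g * n from mul_comm _ _, ← mul_assoc,
              Nat.mul_div_cancel' (Nat.gcd_dvd_right m v)]
            ring
      have he : m / g ∣ n := hcop.dvd_of_dvd_mul_right
        ((mul_dvd_mul_iff_left hg0.ne').mp hstep)
      obtain ⟨s'', ⟨hs''le, hs''ν⟩, _⟩ := hS.2.2.2.1 s' (v / g)
        (Nat.div_dvd_of_dvd (Nat.gcd_dvd_right m v))
      have hs''g : νS s'' = g := by
        rw [hs''ν, ← hv, Nat.div_div_self (Nat.gcd_dvd_right m v) hv0.ne']
      exact ⟨m / g, g, he, ⟨s'', below_trans hS hi his' hs''le, hs''g⟩,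
        (Nat.div_mul_cancel (Nat.gcd_dvd_left m v)).symm⟩
    · intro e u he hex
      obtain ⟨s, his, hsu⟩ := hex
      have he0 : 0 < e := Nat.pos_of_dvd_of_pos he hn0
      have hne0 : 0 < n / e := Nat.div_pos (Nat.le_of_dvd hn0 he) he0
      have hfs : νT (f s) = n * u := by rw [key s his, hsu]
      have hdvd : n / e ∣ νT (f s) := by
        rw [hfs]
        exact dvd_mul_of_dvd_left (Nat.div_dvd_of_dvd he) u
      obtain ⟨t, ⟨htle, htν⟩, _⟩ := hT.2.2.2.1 (f s) (n / e) hdvd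
      have htnorm : νT t = e * u := by
        rw [htν, hfs]
        exact Nat.div_eq_of_eq_mul_left hne0 (by
          rw [show e * u * (n / e) = e * (n / e) * u by ring, Nat.mul_div_cancel' he])
      obtain ⟨j, hj1, hjfs⟩ := exists_min hT (f s)
      have hfis : f i ≤ f s := (hfTP i s his).1
      exact ⟨t, ⟨j, hj1, below_trans hT hj1 hjfs htle, below_trans hT hj1 hjfs hfis⟩, htnorm⟩
  · intro j hj
    refine (hfFin j).subset ?_
    rintro i ⟨hi1, hji⟩
    refine ⟨hji, ?_⟩
    intro s' hs'i hjs'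
    have h1 : νS s' = 1 := Nat.eq_one_of_dvd_one (hi1 ▸ hS.2.1 _ _ hs'i)
    exact min_unique hS hs'i le_rfl h1 hi1
end

section
/- Existence of the additive transfer: Let f : S → T be a T-map of truncation posets and k a commutative ring. Define f^w_⊕ : k^S → k^T by (f^w_⊕⟨x_s⟩)_t = Σ_{s ∈ f⁻¹(t)} (|t|/|s|)·x_s. Then for every (a_s) ∈ W_S(k), the vector f^w_⊕(w(a_s)) lies in the image of the ghost map w : W_T(k) → k^T. Consequently there is a unique natural (in k) map f_⊕ : W_S(k) → W_T(k) covering f^w_⊕ on ghost coordinates. -/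
noncomputable def trGhost {S T : Type*} [PartialOrder S] [PartialOrder T]
    (νS : S → ℕ) (νT : T → ℕ) (f : S → T) {k : Type*} [CommRing k] (x : S → k) : T → k :=
  fun t => ∑ᶠ s ∈ f ⁻¹' {t}, ((νT t / νS s : ℕ) : k) * x s

namespace Aux
open TP

variable {S : Type} [PartialOrder S] {ν : S → ℕ}

theorem norm_inj (hS : IsTPNorm ν) {u v s : S} (hu : u ≤ s) (hv : v ≤ s)
    (h : ν u = ν v) : u = v := by
  obtain ⟨h0, hdvd, _, hex, _⟩ := hS
  obtain ⟨w, _, hw⟩ := hex s (ν s / ν u) (Nat.div_dvd_of_dvd (hdvd u s hu))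
  have hνu : ν u = ν s / (ν s / ν u) :=
    (Nat.div_div_self (hdvd u s hu) (h0 s).ne').symm
  rw [hw u ⟨hu, hνu⟩, hw v ⟨hv, h ▸ hνu⟩]

theorem norm_lt (hS : IsTPNorm ν) {u s : S} (hu : u ≤ s) (hne : u ≠ s) :
    ν u < ν s := by
  have hdvd := hS.2.1 u s hu
  rcases lt_or_eq_of_le (Nat.le_of_dvd (hS.1 s) hdvd) with h | h
  · exact h
  · exact absurd (norm_inj hS hu le_rfl h) hne

/-- existence of the element below `s` with norm `ν s / d` -/
theorem exists_below (hS : IsTPNorm ν) {s : S} {m : ℕ} (hm : m ∣ ν s) :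
    ∃ u, u ≤ s ∧ ν u = m := by
  obtain ⟨u, hu, -⟩ := hS.2.2.2.1 s (ν s / m) (Nat.div_dvd_of_dvd hm)
  refine ⟨u, hu.1, ?_⟩
  rw [hu.2, Nat.div_div_self hm (hS.1 s).ne']

theorem le_of_le_dvd (hS : IsTPNorm ν) {u t s : S} (hu : u ≤ s) (ht : t ≤ s)
    (h : ν u ∣ ν t) : u ≤ t := by
  obtain ⟨v, hv, hνv⟩ := exists_below hS (s := t) h
  have : v = u := norm_inj hS (hv.trans ht) hu hνv
  exact this ▸ hv

theorem downset_finite (hS : IsTPNorm ν) (s : S) : {u : S | u ≤ s}.Finite := by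
  have : Set.InjOn ν {u : S | u ≤ s} := fun a ha b hb h => norm_inj hS ha hb h
  have hsub : ν '' {u : S | u ≤ s} ⊆ (ν s).divisors := by
    rintro - ⟨u, hu, rfl⟩
    exact Nat.mem_divisors.2 ⟨hS.2.1 u s hu, (hS.1 s).ne'⟩
  exact Set.Finite.of_finite_image ((Set.Finite.subset (Set.finite_Icc 1 (ν s))
    (hsub.trans (fun d hd => Set.mem_Icc.2
      ⟨(Nat.one_le_iff_ne_zero.2 (Nat.pos_of_mem_divisors hd).ne'),
        Nat.le_of_dvd (hS.1 s) (Nat.mem_divisors.1 hd).1⟩)))) this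

/-- the down-set of `s` as a Finset -/
noncomputable def DT (hS : IsTPNorm ν) (s : S) : Finset S :=
  (downset_finite hS s).toFinset

theorem mem_DT (hS : IsTPNorm ν) {u s : S} : u ∈ DT hS s ↔ u ≤ s := by
  simp [DT, Set.Finite.mem_toFinset]

theorem ghost_eq {k : Type*} [CommRing k] (hS : IsTPNorm ν) (a : S → k) (s : S) :
    ghost ν a s = ∑ u ∈ DT hS s, (ν u : k) * a u ^ (ν s / ν u) := by
  rw [ghost, ← (downset_finite hS s).coe_toFinset, finsum_mem_coe_finset]
  rfl

end Aux

namespace Aux2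
open MvPolynomial

/-- nat divisibility in a torsion-free-ish setting via prime powers, specialized to
`MvPolynomial σ ℤ`. -/
theorem natCast_dvd_of_prime_pow {σ : Type*} (n : ℕ) (x : MvPolynomial σ ℤ)
    (h : ∀ p k : ℕ, p.Prime → p ^ k ∣ n → (((p ^ k : ℕ)) : MvPolynomial σ ℤ) ∣ x) :
    ((n : ℕ) : MvPolynomial σ ℤ) ∣ x := by
  have hCn : ∀ m : ℕ, (((m : ℕ)) : MvPolynomial σ ℤ) = C (m : ℤ) :=
    fun m => (map_natCast (C : ℤ →+* MvPolynomial σ ℤ) _).symm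
  rw [hCn, C_dvd_iff_dvd_coeff]
  intro i
  rw [Int.natCast_dvd]
  rw [(Nat.dvd_iff_prime_pow_dvd_dvd _ _)]
  intro p k hp hpk
  rw [← Int.natCast_dvd]
  have := h p k hp hpk
  rw [hCn, C_dvd_iff_dvd_coeff] at this
  exact_mod_cast this i

theorem prime_pow_dvd_mul_split {p k a n : ℕ} (hp : p.Prime) (h : p ^ k ∣ a * n)
    (ha : a ≠ 0) (hn : n ≠ 0) : ∃ i j : ℕ, i + j = k ∧ p ^ i ∣ a ∧ p ^ j ∣ n := by
  have hk : k ≤ (a * n).factorization p :=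
    (Nat.Prime.pow_dvd_iff_le_factorization hp (Nat.mul_ne_zero ha hn)).1 h
  rw [Nat.factorization_mul ha hn] at hk
  simp only [Finsupp.add_apply] at hk
  refine ⟨min k (a.factorization p), k - min k (a.factorization p), by omega, ?_, ?_⟩
  · exact (Nat.Prime.pow_dvd_iff_le_factorization hp ha).2 (by omega)
  · exact (Nat.Prime.pow_dvd_iff_le_factorization hp hn).2 (by omega)

/-- Lemma A : if `p ∣ x - y` then `p ^ k ∣ x ^ m - y ^ m` whenever `p ^ k ∣ p * m`. -/
theorem pow_congruence {R : Type*} [CommRing R] {p : ℕ} (hp : p.Prime) {x y : R}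
    (h : (p : R) ∣ x - y) {m k : ℕ} (hk : p ^ k ∣ p * m) :
    ((p ^ k : ℕ) : R) ∣ x ^ m - y ^ m := by
  rcases Nat.eq_zero_or_pos m with rfl | hm
  · simp
  set j := m.factorization p with hj
  have hdec : m = p ^ j * (m / p ^ j) := (Nat.ordProj_mul_ordCompl_eq_self m p).symm
  have hkj : k ≤ j + 1 := by
    have hcop : Nat.Coprime (p ^ k) (m / p ^ j) :=
      Nat.Coprime.pow_left _ ((Nat.Prime.coprime_iff_not_dvd hp).2
        (Nat.not_dvd_ordCompl hp hm.ne'))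
    have hmul : p ^ (j + 1) * (m / p ^ j) = p * m := by
      conv_rhs => rw [hdec]
      ring
    have : p ^ k ∣ p ^ (j + 1) * (m / p ^ j) := hmul ▸ hk
    have := (Nat.Coprime.dvd_of_dvd_mul_right hcop this)
    exact (Nat.pow_dvd_pow_iff_le_right hp.one_lt).1 this
  have h1 : ((p ^ (j + 1) : ℕ) : R) ∣ x ^ p ^ j - y ^ p ^ j := by
    have := dvd_sub_pow_of_dvd_sub h j
    exact_mod_cast this
  have h2 : x ^ p ^ j - y ^ p ^ j ∣ x ^ m - y ^ m := by
    conv_rhs => rw [hdec, pow_mul, pow_mul]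
    exact sub_dvd_pow_sub_pow _ _ _
  calc ((p ^ k : ℕ) : R) ∣ ((p ^ (j+1) : ℕ) : R) := by
        exact_mod_cast Nat.cast_dvd_cast (pow_dvd_pow p hkj)
    _ ∣ x ^ m - y ^ m := h1.trans h2

/-- expand is a Frobenius lift mod p on `MvPolynomial σ ℤ`. -/
theorem expand_frobenius {σ : Type*} {p : ℕ} (hp : p.Prime) (φ : MvPolynomial σ ℤ) :
    ((p : ℕ) : MvPolynomial σ ℤ) ∣ expand p φ - φ ^ p := by
  haveI : Fact p.Prime := ⟨hp⟩
  have hCn : (((p : ℕ)) : MvPolynomial σ ℤ) = C (p : ℤ) :=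
    (map_natCast (C : ℤ →+* MvPolynomial σ ℤ) _).symm
  rw [hCn, C_dvd_iff_dvd_coeff]
  intro i
  rw [← ZMod.intCast_zmod_eq_zero_iff_dvd]
  have key : (MvPolynomial.map (Int.castRingHom (ZMod p))) (expand p φ - φ ^ p) = 0 := by
    rw [map_sub, map_pow, map_expand]
    have : ∀ ψ : MvPolynomial σ (ZMod p), expand p ψ = ψ ^ p := by
      intro ψ
      have : (expand p : MvPolynomial σ (ZMod p) →ₐ[ZMod p] _).toRingHom =
          frobenius (MvPolynomial σ (ZMod p)) p := by
        apply MvPolynomial.ringHom_ext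
        · intro r
          simp [frobenius_def, expand_C, ← map_pow, ZMod.pow_card]
        · intro s
          simp [frobenius_def, expand_X]
      calc expand p ψ = (expand p : MvPolynomial σ (ZMod p) →ₐ[ZMod p] _).toRingHom ψ := rfl
        _ = frobenius (MvPolynomial σ (ZMod p)) p ψ := by rw [this]
        _ = ψ ^ p := rfl
    rw [this, sub_self]
  have := congrArg (MvPolynomial.coeff i) key
  rw [MvPolynomial.coeff_map] at this
  simpa using this

end Aux2

namespace Aux
open TP MvPolynomial Aux2

variable {S : Type} [PartialOrder S] {ν : S → ℕ}

theorem dvd_norm_of_not_le (hS : IsTPNorm ν) {p k : ℕ} {u s s' : S} (hp : p.Prime)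
    (hu : u ≤ s) (hs' : s' ≤ s) (hν : ν s = p * ν s') (hnle : ¬ u ≤ s')
    (hk : p ^ k ∣ ν s) : p ^ k ∣ ν u := by
  have hd : ν u ∣ ν s := hS.2.1 u s hu
  have hnd : ¬ p ∣ ν s / ν u := by
    intro hdvd
    have h1 : ν u * p ∣ ν s := by
      calc ν u * p ∣ ν u * (ν s / ν u) := mul_dvd_mul_left _ hdvd
        _ = ν s := Nat.mul_div_cancel' hd
    have h2 : ν u ∣ ν s' := by
      have : p * ν u ∣ p * ν s' := by rw [mul_comm p (ν u), ← hν]; exact h1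
      exact (mul_dvd_mul_iff_left hp.pos.ne').1 this
    exact hnle (le_of_le_dvd hS hu hs' h2)
  have hcop : Nat.Coprime (p ^ k) (ν s / ν u) :=
    Nat.Coprime.pow_left _ ((Nat.Prime.coprime_iff_not_dvd hp).2 hnd)
  exact Nat.Coprime.dvd_of_dvd_mul_right hcop
    (by rwa [Nat.mul_div_cancel' hd])

theorem exp_split (hS : IsTPNorm ν) {p : ℕ} {u s s' : S} (hu : u ≤ s')
    (hν : ν s = p * ν s') : ν s / ν u = p * (ν s' / ν u) := by
  rw [hν, Nat.mul_div_assoc p (hS.2.1 u s' hu)]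

/-- S-level Dwork congruence for the ghost polynomials of the generators. -/
theorem ghost_X_congruence {S : Type} [PartialOrder S] {ν : S → ℕ} (hS : IsTPNorm ν)
    {p k : ℕ} (hp : p.Prime) {s s' : S} (hs' : s' ≤ s) (hν : ν s = p * ν s')
    (hk : p ^ k ∣ ν s) :
    (((p ^ k : ℕ)) : MvPolynomial S ℤ) ∣
      ghost ν X s - expand p (ghost ν (X : S → MvPolynomial S ℤ) s') := by
  classical
  rw [ghost_eq hS, ghost_eq hS]
  have hexp : (expand p (∑ u ∈ DT hS s', ((ν u : MvPolynomial S ℤ)) * X u ^ (ν s' / ν u)))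
      = ∑ u ∈ DT hS s', ((ν u : MvPolynomial S ℤ)) * X u ^ (ν s / ν u) := by
    rw [map_sum]
    refine Finset.sum_congr rfl fun u hu => ?_
    rw [map_mul, map_pow, map_natCast, expand_X, ← pow_mul,
      ← exp_split hS ((mem_DT hS).1 hu) hν]
  rw [hexp]
  have hsub : DT hS s' ⊆ DT hS s := fun u hu =>
    (mem_DT hS).2 (((mem_DT hS).1 hu).trans hs')
  rw [← Finset.sum_sdiff hsub, add_sub_assoc, sub_self, add_zero]
  refine Finset.dvd_sum fun u hu => ?_
  obtain ⟨hu1, hu2⟩ := Finset.mem_sdiff.1 hu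
  have : p ^ k ∣ ν u := dvd_norm_of_not_le hS hp ((mem_DT hS).1 hu1) hs' hν
    (fun h => hu2 ((mem_DT hS).2 h)) hk
  exact Dvd.dvd.mul_right (by exact_mod_cast Nat.cast_dvd_cast (α := MvPolynomial S ℤ) this) _

end Aux


namespace Aux
open TP MvPolynomial Aux2

variable {S T : Type} [PartialOrder S] [PartialOrder T] {νS : S → ℕ} {νT : T → ℕ}
  {f : S → T}

attribute [local instance] Classical.propDecidable

/-- fiber of `f` over `t` as a Finset -/
noncomputable def FT (hf : IsTMap νS νT f) (t : T) : Finset S := (hf.2.2 t).toFinset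

theorem mem_FT (hf : IsTMap νS νT f) {s : S} {t : T} : s ∈ FT hf t ↔ f s = t := by
  simp [FT, Set.Finite.mem_toFinset]

theorem norm_dvd_fiber (hS : IsTPNorm νS) (hT : IsTPNorm νT) (hf : IsTMap νS νT f)
    {s : S} {t : T} (h : f s = t) : νS s ∣ νT t ∧ νT t / νS s * νS s = νT t := by
  obtain ⟨u, hu, hνu⟩ := exists_below hS (one_dvd (νS s))
  obtain ⟨hle, hratio⟩ := hf.1 u s hu
  rw [h] at hle hratio
  rw [hνu, Nat.div_one] at hratio
  have hdvd : νT (f u) ∣ νT t := h ▸ hT.2.1 (f u) t (h ▸ hle)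
  have : νT t = νT (f u) * νS s := by
    rw [← hratio, Nat.mul_div_cancel' hdvd]
  constructor
  · exact ⟨νT (f u), by rw [this, mul_comm]⟩
  · exact Nat.div_mul_cancel ⟨νT (f u), by rw [this, mul_comm]⟩

noncomputable def downE (hS : IsTPNorm νS) (p : ℕ) (s : S) : S :=
  if h : ∃ u, u ≤ s ∧ νS u = νS s / p then h.choose else s

noncomputable def upE (f : S → T) (t : T) (s' : S) : S :=
  if h : ∃ s, s' ≤ s ∧ f s = t then h.choose else s'

theorem downE_spec (hS : IsTPNorm νS) {p : ℕ} {s : S} (hps : p ∣ νS s) :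
    downE hS p s ≤ s ∧ νS (downE hS p s) = νS s / p := by
  have h : ∃ u, u ≤ s ∧ νS u = νS s / p := exists_below hS (Nat.div_dvd_of_dvd hps)
  rw [downE, dif_pos h]
  exact h.choose_spec

theorem upE_spec {f : S → T} {t : T} {s' : S} (h : ∃ s, s' ≤ s ∧ f s = t) :
    s' ≤ upE f t s' ∧ f (upE f t s') = t := by
  rw [upE, dif_pos h]
  exact h.choose_spec

theorem fiber_up (hS : IsTPNorm νS) (hT : IsTPNorm νT) (hf : IsTMap νS νT f)
    {p : ℕ} (hp : p.Prime) {t t' : T} {s' : S} (h : f s' = t') (htt' : t' ≤ t)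
    (hν : νT t = p * νT t') :
    s' ≤ upE f t s' ∧ f (upE f t s') = t ∧ νS (upE f t s') = p * νS s' := by
  have hex : ∃ s, s' ≤ s ∧ f s = t := hf.2.1 s' t (h ▸ htt')
  obtain ⟨hle, hfs⟩ := upE_spec hex
  refine ⟨hle, hfs, ?_⟩
  obtain ⟨-, hratio⟩ := hf.1 s' (upE f t s') hle
  rw [hfs, h] at hratio
  have hdvdT : νT t' ∣ νT t := hT.2.1 t' t htt'
  have hp' : νT t / νT t' = p := by rw [hν, Nat.mul_div_cancel _ (hT.1 t')]
  have hdvdS : νS s' ∣ νS (upE f t s') := hS.2.1 _ _ hle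
  rw [hp'] at hratio
  rw [← Nat.mul_div_cancel' hdvdS, ← hratio, mul_comm]

theorem fiber_down (hS : IsTPNorm νS) (hT : IsTPNorm νT) (hf : IsTMap νS νT f)
    {p : ℕ} (hp : p.Prime) {t t' : T} {s : S} (hfs : f s = t) (hps : p ∣ νS s)
    (htt' : t' ≤ t) (hν : νT t = p * νT t') :
    downE hS p s ≤ s ∧ νS s = p * νS (downE hS p s) ∧ f (downE hS p s) = t' := by
  obtain ⟨hle, hνd⟩ := downE_spec hS hps
  have hνs : νS s = p * νS (downE hS p s) := by
    rw [hνd, Nat.mul_div_cancel' hps]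
  refine ⟨hle, hνs, ?_⟩
  obtain ⟨hle2, hratio⟩ := hf.1 (downE hS p s) s hle
  rw [hfs] at hle2 hratio
  have hdiv : νS s / νS (downE hS p s) = p := by
    rw [hνd, Nat.div_div_self hps (hS.1 s).ne']
  rw [hdiv] at hratio
  have hdvdT : νT (f (downE hS p s)) ∣ νT t := hT.2.1 _ _ hle2
  have hνfd : νT (f (downE hS p s)) = νT t / p := by
    have h2 := Nat.mul_div_cancel' hdvdT
    rw [hratio] at h2
    rw [hν, Nat.mul_div_cancel_left _ hp.pos]
    refine Nat.eq_of_mul_eq_mul_left hp.pos ?_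
    rw [mul_comm p (νT (f (downE hS p s))), h2, hν]
  -- uniqueness below t of norm νT t / p
  obtain ⟨v, -, hv⟩ := hT.2.2.2.1 t p (Dvd.intro _ hν.symm)
  rw [hv (f (downE hS p s)) ⟨hle2, hνfd⟩,
    hv t' ⟨htt', by rw [hν, Nat.mul_div_cancel_left _ hp.pos]⟩]

end Aux

namespace Aux
open TP MvPolynomial Aux2

variable {S T : Type} [PartialOrder S] [PartialOrder T] {νS : S → ℕ} {νT : T → ℕ}
  {f : S → T}

attribute [local instance] Classical.propDecidable

/-- the ghost transfer vector, as a Finset sum -/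
noncomputable def cF (hS : IsTPNorm νS) (hf : IsTMap νS νT f) (t : T) :
    MvPolynomial S ℤ :=
  ∑ s ∈ FT hf t, ((νT t / νS s : ℕ) : MvPolynomial S ℤ) * ghost νS X s

/-- T-level Dwork congruence for the ghost transfer vector. -/
theorem cF_congruence (hS : IsTPNorm νS) (hT : IsTPNorm νT) (hf : IsTMap νS νT f)
    {p k : ℕ} (hp : p.Prime) {t t' : T} (htt' : t' ≤ t) (hν : νT t = p * νT t')
    (hk : p ^ k ∣ νT t) :
    (((p ^ k : ℕ)) : MvPolynomial S ℤ) ∣ cF hS hf t - expand p (cF hS hf t') := by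
  classical
  set R := MvPolynomial S ℤ
  have hexp : expand p (cF hS hf t') =
      ∑ s' ∈ FT hf t', ((νT t' / νS s' : ℕ) : R) * expand p (ghost νS X s') := by
    rw [cF, map_sum]
    exact Finset.sum_congr rfl fun s' _ => by rw [map_mul, map_natCast]
  set filt := (FT hf t).filter (fun s => p ∣ νS s) with hfilt
  have hreindex : ∑ s' ∈ FT hf t', ((νT t' / νS s' : ℕ) : R) * expand p (ghost νS X s')
      = ∑ s ∈ filt, ((νT t / νS s : ℕ) : R) * expand p (ghost νS X (downE hS p s)) := by
    refine Finset.sum_nbij' (upE f t) (downE hS p) ?_ ?_ ?_ ?_ ?_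
    · -- upE maps into filt
      intro s' hs'
      have hfs' := (mem_FT hf).1 hs'
      obtain ⟨h1, h2, h3⟩ := fiber_up hS hT hf hp hfs' htt' hν
      exact Finset.mem_filter.2 ⟨(mem_FT hf).2 h2, Dvd.intro _ h3.symm⟩
    · -- downE maps into FT t'
      intro s hs
      obtain ⟨hs1, hs2⟩ := Finset.mem_filter.1 hs
      obtain ⟨h1, h2, h3⟩ := fiber_down hS hT hf hp ((mem_FT hf).1 hs1) hs2 htt' hν
      exact (mem_FT hf).2 h3
    · -- left inverse
      intro s' hs'
      have hfs' := (mem_FT hf).1 hs'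
      obtain ⟨h1, h2, h3⟩ := fiber_up hS hT hf hp hfs' htt' hν
      obtain ⟨d1, d2, d3⟩ := fiber_down hS hT hf hp h2 (Dvd.intro _ h3.symm) htt' hν
      refine norm_inj hS d1 h1 ?_
      have : p * νS (downE hS p (upE f t s')) = p * νS s' := by rw [← d2, h3]
      exact Nat.eq_of_mul_eq_mul_left hp.pos this
    · -- right inverse
      intro s hs
      obtain ⟨hs1, hs2⟩ := Finset.mem_filter.1 hs
      have hfs := (mem_FT hf).1 hs1
      obtain ⟨d1, d2, d3⟩ := fiber_down hS hT hf hp hfs hs2 htt' hν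
      obtain ⟨u1, u2, u3⟩ := fiber_up hS hT hf hp d3 htt' hν
      refine (hS.2.2.2.2 (downE hS p s) _ s u1 d1 ?_).symm.symm
      rw [u3, ← d2]
    · -- summands agree
      intro s' hs'
      have hfs' := (mem_FT hf).1 hs'
      obtain ⟨h1, h2, h3⟩ := fiber_up hS hT hf hp hfs' htt' hν
      obtain ⟨d1, d2, d3⟩ := fiber_down hS hT hf hp h2 (Dvd.intro _ h3.symm) htt' hν
      have hds : downE hS p (upE f t s') = s' := by
        refine norm_inj hS d1 h1 (Nat.eq_of_mul_eq_mul_left hp.pos ?_)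
        rw [← d2, h3]
      rw [hds]
      congr 2
      rw [hν, h3, Nat.mul_div_mul_left _ _ hp.pos]
  rw [hexp, hreindex, cF, ← Finset.sum_filter_add_sum_filter_not (FT hf t) (fun s => p ∣ νS s),
    ← hfilt, add_sub_right_comm, ← Finset.sum_sub_distrib]
  refine dvd_add (Finset.dvd_sum fun s hs => ?_) (Finset.dvd_sum fun s hs => ?_)
  · -- s with p ∣ νS s : use the S-level congruence
    obtain ⟨hs1, hs2⟩ := Finset.mem_filter.1 hs
    have hfs := (mem_FT hf).1 hs1
    obtain ⟨d1, d2, d3⟩ := fiber_down hS hT hf hp hfs hs2 htt' hν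
    rw [← mul_sub]
    obtain ⟨hdvd, hmul⟩ := norm_dvd_fiber hS hT hf hfs
    obtain ⟨i, j, hij, hi, hj⟩ := prime_pow_dvd_mul_split hp
      (a := νT t / νS s) (n := νS s) (by rw [hmul]; exact hk)
      (Nat.div_pos (Nat.le_of_dvd (hT.1 t) hdvd) (hS.1 s)).ne' (hS.1 s).ne'
    have h1 : ((p ^ i : ℕ) : R) ∣ ((νT t / νS s : ℕ) : R) := Nat.cast_dvd_cast hi
    have h2 : ((p ^ j : ℕ) : R) ∣ ghost νS X s - expand p (ghost νS X (downE hS p s)) :=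
      ghost_X_congruence hS hp d1 d2 hj
    have := mul_dvd_mul h1 h2
    rw [← Nat.cast_mul, ← pow_add, hij] at this
    exact this
  · -- s with p ∤ νS s : coefficient divisible by p ^ k
    obtain ⟨hs1, hs2⟩ := Finset.mem_filter.1 hs
    have hfs := (mem_FT hf).1 hs1
    obtain ⟨hdvd, hmul⟩ := norm_dvd_fiber hS hT hf hfs
    have hcop : Nat.Coprime (p ^ k) (νS s) :=
      Nat.Coprime.pow_left _ ((Nat.Prime.coprime_iff_not_dvd hp).2 hs2)
    have : p ^ k ∣ νT t / νS s :=
      Nat.Coprime.dvd_of_dvd_mul_right hcop (by rw [hmul]; exact hk)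
    exact Dvd.dvd.mul_right (Nat.cast_dvd_cast this) _

end Aux

namespace Aux
open TP MvPolynomial Aux2

attribute [local instance] Classical.propDecidable

noncomputable def divBy {σ : Type} (n : ℕ) (x : MvPolynomial σ ℤ) : MvPolynomial σ ℤ :=
  if h : ∃ r, (n : MvPolynomial σ ℤ) * r = x then h.choose else 0

theorem divBy_spec {σ : Type} {n : ℕ} {x : MvPolynomial σ ℤ}
    (h : ∃ r, (n : MvPolynomial σ ℤ) * r = x) :
    (n : MvPolynomial σ ℤ) * divBy n x = x := by
  rw [divBy, dif_pos h]; exact h.choose_spec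

variable {S T : Type} [PartialOrder S] [PartialOrder T] {νT : T → ℕ}

noncomputable def wlift (hT : IsTPNorm νT) (c : T → MvPolynomial S ℤ) : T → MvPolynomial S ℤ
  | t => divBy (νT t) (c t - ∑ u ∈ ((DT hT t).erase t).attach,
      ((νT u.1 : MvPolynomial S ℤ)) * (wlift hT c u.1) ^ (νT t / νT u.1))
termination_by t => νT t
decreasing_by
  exact norm_lt hT (Finset.mem_of_mem_erase u.2 |> (mem_DT hT).1) (Finset.ne_of_mem_erase u.2)

theorem wlift_ghost (hT : IsTPNorm νT) (c : T → MvPolynomial S ℤ)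
    (hc : ∀ (p k : ℕ) (t t' : T), p.Prime → t' ≤ t → νT t = p * νT t' → p ^ k ∣ νT t →
      (((p ^ k : ℕ)) : MvPolynomial S ℤ) ∣ c t - expand p (c t')) :
    ∀ t : T, (∑ u ∈ DT hT t, ((νT u : MvPolynomial S ℤ)) * (wlift hT c u) ^ (νT t / νT u))
      = c t := by
  classical
  suffices H : ∀ n : ℕ, ∀ t : T, νT t = n →
      (∑ u ∈ DT hT t, ((νT u : MvPolynomial S ℤ)) * (wlift hT c u) ^ (νT t / νT u)) = c t by
    exact fun t => H (νT t) t rfl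
  intro n
  induction n using Nat.strong_induction_on with
  | _ n IH =>
    intro t hn
    subst hn
    set g : T → MvPolynomial S ℤ := fun u => ((νT u : MvPolynomial S ℤ)) * (wlift hT c u) ^ (νT t / νT u) with hg
    set E := (DT hT t).erase t with hE
    have key : ((νT t : ℕ) : MvPolynomial S ℤ) ∣ c t - ∑ u ∈ E, g u := by
      apply natCast_dvd_of_prime_pow
      intro p k hp hk
      rcases Nat.eq_zero_or_pos k with rfl | hkpos
      · simpa using one_dvd _
      have hpt : p ∣ νT t := (dvd_pow_self p hkpos.ne').trans hk
      obtain ⟨t', ht', hνt'⟩ := exists_below hT (Nat.div_dvd_of_dvd hpt)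
      have hν : νT t = p * νT t' := by rw [hνt', Nat.mul_div_cancel' hpt]
      have hlt : νT t' < νT t := by
        rw [hν]; exact (Nat.lt_mul_iff_one_lt_left (hT.1 t')).2 hp.one_lt
      have hct' := IH (νT t') hlt t' rfl
      have hexp : expand p (c t') =
          ∑ u ∈ DT hT t', ((νT u : MvPolynomial S ℤ)) * (expand p (wlift hT c u)) ^ (νT t' / νT u) := by
        rw [← hct', map_sum]
        exact Finset.sum_congr rfl fun u hu => by rw [map_mul, map_natCast, map_pow]
      have hsubE : DT hT t' ⊆ E := by
        intro u hu
        have hu' := (mem_DT hT).1 hu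
        refine Finset.mem_erase.2 ⟨?_, (mem_DT hT).2 (hu'.trans ht')⟩
        intro h
        subst h
        exact absurd (Nat.le_of_dvd (hT.1 t') (hT.2.1 u t' hu')) (not_le.2 hlt)
      have hEsplit : ∑ u ∈ E, g u = ∑ u ∈ E \ DT hT t', g u + ∑ u ∈ DT hT t', g u :=
        (Finset.sum_sdiff hsubE).symm
      have halg : c t - ∑ u ∈ E, g u =
          (c t - expand p (c t')) +
          (∑ u ∈ DT hT t',
            (((νT u : MvPolynomial S ℤ)) * (expand p (wlift hT c u)) ^ (νT t' / νT u) - g u)) -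
          ∑ u ∈ E \ DT hT t', g u := by
        rw [hEsplit, hexp, Finset.sum_sub_distrib]
        ring
      rw [halg]
      refine dvd_sub (dvd_add (hc p k t t' hp ht' hν hk) (Finset.dvd_sum fun u hu => ?_))
        (Finset.dvd_sum fun u hu => ?_)
      · -- matched terms
        have hu' := (mem_DT hT).1 hu
        rw [hg]
        simp only
        rw [← mul_sub, exp_split hT hu' hν, pow_mul]
        have hνu : νT u ≠ 0 := (hT.1 u).ne'
        have hmul : νT u * (νT t / νT u) = νT t :=
          Nat.mul_div_cancel' (hT.2.1 u t (hu'.trans ht'))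
        obtain ⟨i, j, hij, hi, hj⟩ := prime_pow_dvd_mul_split hp
          (a := νT u) (n := νT t / νT u) (by rw [hmul]; exact hk) hνu
          (Nat.div_pos (Nat.le_of_dvd (hT.1 t) (hT.2.1 u t (hu'.trans ht')))
            (hT.1 u)).ne'
        rw [exp_split hT hu' hν] at hj
        have h2 : ((p ^ j : ℕ) : MvPolynomial S ℤ) ∣
            (expand p (wlift hT c u)) ^ (νT t' / νT u) - ((wlift hT c u) ^ p) ^ (νT t' / νT u) :=
          pow_congruence hp (expand_frobenius hp _) hj
        have := mul_dvd_mul (Nat.cast_dvd_cast (α := MvPolynomial S ℤ) hi) h2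
        rw [← Nat.cast_mul, ← pow_add, hij] at this
        exact this
      · -- unmatched terms
        obtain ⟨hu1, hu2⟩ := Finset.mem_sdiff.1 hu
        have hu' := (mem_DT hT).1 (Finset.mem_of_mem_erase hu1)
        have : p ^ k ∣ νT u := dvd_norm_of_not_le hT hp hu' ht' hν
          (fun h => hu2 ((mem_DT hT).2 h)) hk
        exact Dvd.dvd.mul_right (Nat.cast_dvd_cast this) _
    -- now finish using the defining equation of wlift
    obtain ⟨r, hr⟩ := key
    have hbt : ((νT t : ℕ) : MvPolynomial S ℤ) * wlift hT c t = c t - ∑ u ∈ E, g u := by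
      rw [wlift]
      rw [Finset.sum_attach (((DT hT t).erase t)) (fun u => ((νT u : MvPolynomial S ℤ)) * (wlift hT c u) ^ (νT t / νT u))]
      exact divBy_spec ⟨r, hr.symm⟩
    have htmem : t ∈ DT hT t := (mem_DT hT).2 le_rfl
    rw [← Finset.add_sum_erase _ g htmem]
    have : g t = ((νT t : ℕ) : MvPolynomial S ℤ) * wlift hT c t := by
      rw [hg]; simp only; rw [Nat.div_self (hT.1 t), pow_one]
    rw [this, hbt, ← hE]
    ring

end Aux


namespace Aux
open TP MvPolynomial Aux2

variable {S T : Type} [PartialOrder S] [PartialOrder T] {νS : S → ℕ} {νT : T → ℕ}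
  {f : S → T}

theorem ghost_map {S : Type} [PartialOrder S] {ν : S → ℕ} (hS : IsTPNorm ν)
    {k₁ k₂ : Type} [CommRing k₁] [CommRing k₂] (g : k₁ →+* k₂) (a : S → k₁) (s : S) :
    ghost ν (fun u => g (a u)) s = g (ghost ν a s) := by
  rw [ghost_eq hS, ghost_eq hS, map_sum]
  exact Finset.sum_congr rfl fun u _ => by rw [map_mul, map_natCast, map_pow]

theorem trGhost_eq (hf : IsTMap νS νT f) {k : Type} [CommRing k] (x : S → k) (t : T) :
    trGhost νS νT f x t = ∑ s ∈ FT hf t, ((νT t / νS s : ℕ) : k) * x s := by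
  rw [trGhost, ← (hf.2.2 t).coe_toFinset, finsum_mem_coe_finset]
  rfl

theorem trGhost_map (hf : IsTMap νS νT f) {k₁ k₂ : Type} [CommRing k₁] [CommRing k₂]
    (g : k₁ →+* k₂) (x : S → k₁) (t : T) :
    trGhost νS νT f (fun s => g (x s)) t = g (trGhost νS νT f x t) := by
  rw [trGhost_eq hf, trGhost_eq hf, map_sum]
  exact Finset.sum_congr rfl fun s _ => by rw [map_mul, map_natCast]

theorem ghost_inj (hT : IsTPNorm νT) {b₁ b₂ : T → MvPolynomial S ℤ}
    (h : ∀ t, ghost νT b₁ t = ghost νT b₂ t) : b₁ = b₂ := by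
  classical
  funext t
  suffices H : ∀ n : ℕ, ∀ t : T, νT t = n → b₁ t = b₂ t from H (νT t) t rfl
  intro n
  induction n using Nat.strong_induction_on with
  | _ n IH =>
    intro t hn
    subst hn
    have ht := h t
    rw [ghost_eq hT, ghost_eq hT] at ht
    have htmem : t ∈ DT hT t := (mem_DT hT).2 le_rfl
    rw [← Finset.add_sum_erase _ _ htmem, ← Finset.add_sum_erase _ _ htmem] at ht
    have hsum : ∑ u ∈ (DT hT t).erase t, ((νT u : MvPolynomial S ℤ)) * b₁ u ^ (νT t / νT u)
        = ∑ u ∈ (DT hT t).erase t, ((νT u : MvPolynomial S ℤ)) * b₂ u ^ (νT t / νT u) := by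
      refine Finset.sum_congr rfl fun u hu => ?_
      have hlt : νT u < νT t := norm_lt hT ((mem_DT hT).1 (Finset.mem_of_mem_erase hu))
        (Finset.ne_of_mem_erase hu)
      rw [IH (νT u) hlt u rfl]
    rw [hsum, add_left_inj, Nat.div_self (hT.1 t), pow_one, pow_one] at ht
    exact mul_left_cancel₀ (Nat.cast_ne_zero.mpr (hT.1 t).ne') ht

end Aux


open TP MvPolynomial Aux Aux2

/-- Existence and uniqueness of the additive transfer `f_⊕` induced by a T-map
`f : S → T`: on ghost coordinates it is `(x_s) ↦ (Σ_{f s = t} (|t|/|s|)·x_s)`,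
it lifts to Witt coordinates, and the lift is unique among maps natural in `k`. -/
theorem stmt11 {S T : Type} [PartialOrder S] [PartialOrder T]
    (νS : S → ℕ) (νT : T → ℕ) (hS : TP.IsTPNorm νS) (hT : TP.IsTPNorm νT)
    (f : S → T) (hf : TP.IsTMap νS νT f) :
    (∀ (k : Type) [CommRing k], ∀ a : S → k,
        ∃ b : T → k, TP.ghost νT b = trGhost νS νT f (TP.ghost νS a)) ∧
    ∃! F : ∀ (k : Type) [CommRing k], (S → k) → (T → k),
      (∀ (k : Type) [CommRing k], ∀ a : S → k,
        TP.ghost νT (F k a) = trGhost νS νT f (TP.ghost νS a)) ∧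
      (∀ (k₁ k₂ : Type) [CommRing k₁] [CommRing k₂], ∀ (g : k₁ →+* k₂) (a : S → k₁),
        F k₂ (fun s => g (a s)) = fun t => g (F k₁ a t)) := by
  classical
  -- the universal lift over `MvPolynomial S ℤ`
  set c : T → MvPolynomial S ℤ := cF hS hf with hc
  have hcg : ∀ t, c t = trGhost νS νT f (ghost νS X) t := fun t => by
    rw [trGhost_eq hf]; rfl
  set b₀ : T → MvPolynomial S ℤ := wlift hT c with hb₀def
  have hb₀ : ∀ t, ghost νT b₀ t = trGhost νS νT f (ghost νS X) t := by
    intro t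
    rw [ghost_eq hT, ← hcg t]
    exact wlift_ghost hT c
      (fun p k t t' hp htt' hν hk => cF_congruence hS hT hf hp htt' hν hk) t
  -- the candidate transfer
  set F : ∀ (k : Type) [CommRing k], (S → k) → (T → k) :=
    fun k _ a t => eval₂ (Int.castRingHom k) a (b₀ t) with hF
  have hFg : ∀ (k : Type) [CommRing k] (a : S → k) (t : T),
      F k a t = (eval₂Hom (Int.castRingHom k) a) (b₀ t) := fun k _ a t => rfl
  -- ghost property of F
  have hghostF : ∀ (k : Type) [CommRing k], ∀ a : S → k,
      TP.ghost νT (F k a) = trGhost νS νT f (TP.ghost νS a) := by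
    intro k _ a
    set g : MvPolynomial S ℤ →+* k := eval₂Hom (Int.castRingHom k) a with hg
    have hgX : (fun s => g (X s)) = a := funext fun s => eval₂_X _ _ _
    funext t
    calc ghost νT (F k a) t = ghost νT (fun u => g (b₀ u)) t := rfl
      _ = g (ghost νT b₀ t) := ghost_map hT g b₀ t
      _ = g (trGhost νS νT f (ghost νS X) t) := by rw [hb₀ t]
      _ = trGhost νS νT f (fun s => g (ghost νS X s)) t := (trGhost_map hf g _ t).symm
      _ = trGhost νS νT f (ghost νS (fun s => g (X s))) t := by
          congr 1
          exact funext fun s => (ghost_map hS g X s).symm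
      _ = trGhost νS νT f (ghost νS a) t := by rw [hgX]
  -- naturality of F
  have hnatF : ∀ (k₁ k₂ : Type) [CommRing k₁] [CommRing k₂], ∀ (g : k₁ →+* k₂) (a : S → k₁),
      F k₂ (fun s => g (a s)) = fun t => g (F k₁ a t) := by
    intro k₁ k₂ _ _ g a
    funext t
    rw [hF]
    simp only
    rw [eval₂_comp_left g (Int.castRingHom k₁) a (b₀ t)]
    congr 1
    exact Subsingleton.elim _ _
  refine ⟨fun k _ a => ⟨F k a, hghostF k a⟩, F, ⟨hghostF, hnatF⟩, ?_⟩
  -- uniqueness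
  intro F' ⟨h1', h2'⟩
  have hkey : F' (MvPolynomial S ℤ) X = F (MvPolynomial S ℤ) X := by
    apply ghost_inj hT
    intro t
    have e1 := congrFun (h1' (MvPolynomial S ℤ) X) t
    have e2 := congrFun (hghostF (MvPolynomial S ℤ) X) t
    rw [e1, e2]
  funext k
  funext inst
  funext a
  set g : MvPolynomial S ℤ →+* k := eval₂Hom (Int.castRingHom k) a with hg
  have hgX : (fun s => g (X s)) = a := funext fun s => eval₂_X _ _ _
  calc F' k a = F' k (fun s => g (X s)) := by rw [hgX]
    _ = fun t => g (F' (MvPolynomial S ℤ) X t) := h2' (MvPolynomial S ℤ) k g X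
    _ = fun t => g (F (MvPolynomial S ℤ) X t) := by rw [hkey]
    _ = F k (fun s => g (X s)) := (hnatF (MvPolynomial S ℤ) k g X).symm
    _ = F k a := by rw [hgX]
end
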